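/- arXiv:2508.13510 — 7 statements merged into one kernel-verified Lean document; each statement's English description precedes it below -/
import Mathlib

section
/- Let A be an N×N invertible Hermitian complex matrix and let η : ℝ → ℂ be an integrable function with Fourier transform η̂(s) = ∫_ℝ η(k) e^{-i k s} dk. Assume that for every eigenvalue λ of A the improper integral ∫_0^∞ η̂(λ s) ds converges to 1/λ, and that the iterated integral ∫_0^∞ ∫_ℝ η(k) e^{-i k A s} dk ds (with e^{-i k A s} the matrix exponential) is well defined, i.e. k ↦ η(k) e^{-i k A s} is integrable for each s ≥ 0 and s ↦ ∫_ℝ η(k) e^{-i k A s} dk is integrable on [0, ∞). Then A^{-1} = ∫_0^∞ ∫_ℝ η(k) e^{-i k A s} dk ds. -/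
open MeasureTheory Filter Matrix

attribute [local instance] Matrix.normedAddCommGroup Matrix.normedSpace

namespace Stmt0Aux

variable {n : Type*} [Fintype n] [DecidableEq n]

lemma diagonal_eq_sum (v : n → ℂ) :
    Matrix.diagonal v = ∑ i, v i • Matrix.single i i (1:ℂ) := by
  ext a b
  simp [Matrix.sum_apply, Matrix.diagonal_apply, Matrix.single, ite_and,
    Finset.sum_ite_eq, eq_comm]

lemma conj_diag_eq_sum (U V : Matrix n n ℂ) (v : n → ℂ) :
    U * Matrix.diagonal v * V
      = ∑ i, v i • (U * Matrix.single i i (1:ℂ) * V) := by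
  rw [diagonal_eq_sum, Finset.mul_sum, Finset.sum_mul]
  exact Finset.sum_congr rfl fun i _ => by rw [mul_smul_comm, smul_mul_assoc]

lemma integral_conj_diag {α : Type*} [MeasurableSpace α] {μ : Measure α}
    (U V : Matrix n n ℂ) (g : α → n → ℂ)
    (hg : ∀ i, Integrable (fun x => g x i) μ) :
    ∫ x, U * Matrix.diagonal (g x) * V ∂μ
      = U * Matrix.diagonal (fun i => ∫ x, g x i ∂μ) * V := by
  simp only [conj_diag_eq_sum]
  rw [integral_finset_sum _ fun i _ => (hg i).smul_const _]
  simp_rw [integral_smul_const]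

/-- entry evaluation as a linear map -/
def entryLM (i j : n) : Matrix n n ℂ →ₗ[ℂ] ℂ where
  toFun M := M i j
  map_add' _ _ := rfl
  map_smul' _ _ := rfl

/-- conjugation as a linear map -/
noncomputable def conjLM (U V : Matrix n n ℂ) : Matrix n n ℂ →ₗ[ℂ] Matrix n n ℂ where
  toFun M := U * M * V
  map_add' x y := by simp [Matrix.mul_add, Matrix.add_mul]
  map_smul' c x := by simp [mul_smul_comm, smul_mul_assoc]

lemma exp_smul_eq {A : Matrix n n ℂ} (hA : A.IsHermitian) (c : ℂ) :
    NormedSpace.exp (c • A)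
      = (hA.eigenvectorUnitary : Matrix n n ℂ)
        * Matrix.diagonal (fun i => Complex.exp (c * (hA.eigenvalues i : ℂ)))
        * star (hA.eigenvectorUnitary : Matrix n n ℂ) := by
  set U : Matrix n n ℂ := (hA.eigenvectorUnitary : Matrix n n ℂ) with hUdef
  have hU : U * star U = 1 := mem_unitaryGroup_iff.mp hA.eigenvectorUnitary.2
  have h'U : star U * U = 1 := mem_unitaryGroup_iff'.mp hA.eigenvectorUnitary.2
  have hUinv : U⁻¹ = star U := inv_eq_right_inv hU
  have hUnit : IsUnit U := ⟨⟨U, star U, hU, h'U⟩, rfl⟩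
  have h1 : c • A = U * Matrix.diagonal (fun i => c * (hA.eigenvalues i : ℂ)) * star U := by
    conv_lhs => rw [hA.spectral_theorem]
    rw [Unitary.conjStarAlgAut_apply, ← hUdef]
    have : (fun i => c * (hA.eigenvalues i : ℂ)) = c • (RCLike.ofReal ∘ hA.eigenvalues) := by
      funext i; simp [Pi.smul_apply, smul_eq_mul]
    rw [this, Matrix.diagonal_smul, mul_smul_comm, smul_mul_assoc]
  rw [h1, ← hUinv, Matrix.exp_conj U _ hUnit, Matrix.exp_diagonal, Pi.exp_def]
  rw [hUinv]
  congr 1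
  congr 1
  funext i
  rw [Complex.exp_eq_exp_ℂ]

end Stmt0Aux

open Stmt0Aux

/-- Let `A` be an `N×N` invertible Hermitian complex matrix and `η : ℝ → ℂ`
integrable, with Fourier transform `η̂(s) = ∫_ℝ η(k) e^{-iks} dk`. Assume for every eigenvalue
`λ` of `A` the improper integral `∫_0^∞ η̂(λ s) ds` converges to `1/λ`, and that the iterated
integral `∫_0^∞ ∫_ℝ η(k) e^{-ikAs} dk ds` is well defined. Then
`A⁻¹ = ∫_0^∞ ∫_ℝ η(k) e^{-ikAs} dk ds`. -/
theorem stmt_0 {N : ℕ} (A : Matrix (Fin N) (Fin N) ℂ) (hA : A.IsHermitian)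
    (hInv : IsUnit A.det) (η : ℝ → ℂ) (hη : Integrable η)
    (ηhat : ℝ → ℂ)
    (hηhat : ∀ s : ℝ, ηhat s = ∫ k : ℝ, η k * Complex.exp (-(Complex.I * k * s)))
    (heig : ∀ i : Fin N,
      Tendsto (fun T : ℝ => ∫ s in (0:ℝ)..T, ηhat (hA.eigenvalues i * s)) atTop
        (nhds (1 / (hA.eigenvalues i : ℂ))))
    (hint1 : ∀ s : ℝ, 0 ≤ s →
      @Integrable _ _ SeminormedAddGroup.toContinuousENorm _ _
        (fun k : ℝ => η k • NormedSpace.exp ((-(Complex.I * k * s)) • A)) volume)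
    (hint2 : @IntegrableOn _ _ _ _ SeminormedAddGroup.toContinuousENorm
      (fun s : ℝ => ∫ k : ℝ, η k • NormedSpace.exp ((-(Complex.I * k * s)) • A))
      (Set.Ioi 0) volume) :
    A⁻¹ = ∫ s in Set.Ioi (0:ℝ), ∫ k : ℝ,
        η k • NormedSpace.exp ((-(Complex.I * k * s)) • A) := by
  classical
  set U : Matrix (Fin N) (Fin N) ℂ := (hA.eigenvectorUnitary : Matrix (Fin N) (Fin N) ℂ)
    with hUdef
  have hU : U * star U = 1 := mem_unitaryGroup_iff.mp hA.eigenvectorUnitary.2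
  have h'U : star U * U = 1 := mem_unitaryGroup_iff'.mp hA.eigenvectorUnitary.2
  -- eigenvalues are nonzero
  have hlam : ∀ i, (hA.eigenvalues i : ℂ) ≠ 0 := by
    intro i h
    have hdet : A.det = ∏ j, (hA.eigenvalues j : ℂ) := hA.det_eq_prod_eigenvalues
    have h0 : A.det ≠ 0 := hInv.ne_zero
    rw [hdet] at h0
    exact h0 (Finset.prod_eq_zero (Finset.mem_univ i) h)
  -- integrability of scalar integrands (inner integral)
  have hgint : ∀ (s : ℝ) (i : Fin N),
      Integrable (fun k : ℝ => η k * Complex.exp (-(Complex.I * k * s) * (hA.eigenvalues i : ℂ))) := by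
    intro s i
    have hmeas : AEStronglyMeasurable
        (fun k : ℝ => Complex.exp (-(Complex.I * k * s) * (hA.eigenvalues i : ℂ))) volume := by
      apply Continuous.aestronglyMeasurable
      fun_prop
    have hb : ∀ k : ℝ, ‖Complex.exp (-(Complex.I * k * s) * (hA.eigenvalues i : ℂ))‖ ≤ 1 := by
      intro k
      rw [Complex.norm_exp]
      have : (-(Complex.I * k * s) * (hA.eigenvalues i : ℂ)).re = 0 := by
        simp [Complex.mul_re]
      rw [this, Real.exp_zero]
    have := hη.bdd_mul hmeas (Filter.Eventually.of_forall hb)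
    simpa [mul_comm] using this
  -- the inner integral computed
  have hF : ∀ s : ℝ, (∫ k : ℝ, η k • NormedSpace.exp ((-(Complex.I * k * s)) • A))
      = U * Matrix.diagonal (fun i => ηhat (hA.eigenvalues i * s)) * star U := by
    intro s
    have h1 : ∀ k : ℝ, η k • NormedSpace.exp ((-(Complex.I * k * s)) • A)
        = U * Matrix.diagonal
            (fun i => η k * Complex.exp (-(Complex.I * k * s) * (hA.eigenvalues i : ℂ)))
            * star U := by
      intro k
      rw [exp_smul_eq hA, ← hUdef]
      have : (fun i => η k * Complex.exp (-(Complex.I * k * s) * (hA.eigenvalues i : ℂ)))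
          = η k • (fun i => Complex.exp (-(Complex.I * k * s) * (hA.eigenvalues i : ℂ))) := by
        funext i; simp [smul_eq_mul]
      rw [this, Matrix.diagonal_smul, mul_smul_comm, smul_mul_assoc]
    simp only [h1]
    rw [integral_conj_diag U (star U) _ (hgint s)]
    have hfun : (fun i => ∫ k : ℝ, η k * Complex.exp (-(Complex.I * k * s) * (hA.eigenvalues i : ℂ)))
        = fun i => ηhat (hA.eigenvalues i * s) := by
      funext i
      rw [hηhat]
      have : ∀ k : ℝ, -(Complex.I * k * s) * (hA.eigenvalues i : ℂ)
          = -(Complex.I * k * ((hA.eigenvalues i * s : ℝ) : ℂ)) := by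
        intro k; push_cast; ring
      simp only [this]
    rw [hfun]
  -- integrability of each diagonal scalar function on Ioi 0
  have hgInt' : ∀ i : Fin N,
      Integrable (fun s : ℝ => ηhat (hA.eigenvalues i * s)) (volume.restrict (Set.Ioi 0)) := by
    intro i
    let φ : Matrix (Fin N) (Fin N) ℂ →L[ℂ] ℂ :=
      LinearMap.toContinuousLinearMap ((entryLM i i).comp (conjLM (star U) U))
    have hc := φ.integrable_comp hint2
    have heq : (fun s : ℝ => φ (∫ k : ℝ, η k • NormedSpace.exp ((-(Complex.I * k * s)) • A)))
        = fun s : ℝ => ηhat (hA.eigenvalues i * s) := by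
      funext s
      have : φ (∫ k : ℝ, η k • NormedSpace.exp ((-(Complex.I * k * s)) • A))
          = (star U * (U * Matrix.diagonal (fun j => ηhat (hA.eigenvalues j * s)) * star U) * U) i i := by
        rw [hF s]; rfl
      rw [this]
      have h2 : star U * (U * Matrix.diagonal (fun j => ηhat (hA.eigenvalues j * s)) * star U) * U
          = Matrix.diagonal (fun j => ηhat (hA.eigenvalues j * s)) := by
        calc star U * (U * Matrix.diagonal (fun j => ηhat (hA.eigenvalues j * s)) * star U) * U
            = (star U * U) * Matrix.diagonal (fun j => ηhat (hA.eigenvalues j * s)) * (star U * U) := by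
              simp only [Matrix.mul_assoc]
          _ = _ := by rw [h'U, one_mul, mul_one]
      rw [h2, Matrix.diagonal_apply_eq]
    exact hc.congr (Filter.Eventually.of_forall fun s => congrFun heq s)
  -- value of each improper integral
  have hIoi : ∀ i : Fin N,
      (∫ s in Set.Ioi (0:ℝ), ηhat (hA.eigenvalues i * s)) = (hA.eigenvalues i : ℂ)⁻¹ := by
    intro i
    have h1 := intervalIntegral_tendsto_integral_Ioi (μ := volume) (0:ℝ) (hgInt' i)
      (tendsto_id (α := ℝ))
    have := tendsto_nhds_unique h1 (heig i)
    rwa [one_div] at this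
  -- inverse formula
  have hAinv : A⁻¹ = U * Matrix.diagonal (fun i => (hA.eigenvalues i : ℂ)⁻¹) * star U := by
    apply inv_eq_right_inv
    have hspec : A = U * Matrix.diagonal (fun i => (hA.eigenvalues i : ℂ)) * star U := by
      rw [hUdef]; exact hA.spectral_theorem
    calc A * (U * Matrix.diagonal (fun i => (hA.eigenvalues i : ℂ)⁻¹) * star U)
        = (U * Matrix.diagonal (fun i => (hA.eigenvalues i : ℂ)) * star U)
          * (U * Matrix.diagonal (fun i => (hA.eigenvalues i : ℂ)⁻¹) * star U) := by
          rw [← hspec]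
      _ = U * ((Matrix.diagonal (fun i => (hA.eigenvalues i : ℂ))
            * ((star U * U) * Matrix.diagonal (fun i => (hA.eigenvalues i : ℂ)⁻¹))) * star U) := by
          simp only [Matrix.mul_assoc]
      _ = U * ((Matrix.diagonal (fun i => (hA.eigenvalues i : ℂ))
            * Matrix.diagonal (fun i => (hA.eigenvalues i : ℂ)⁻¹)) * star U) := by
          rw [h'U, one_mul]
      _ = U * star U := by
          rw [Matrix.diagonal_mul_diagonal]
          have : (fun i => (hA.eigenvalues i : ℂ) * (hA.eigenvalues i : ℂ)⁻¹)
              = fun _ => (1:ℂ) := by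
            funext i; exact mul_inv_cancel₀ (hlam i)
          rw [this, Matrix.diagonal_one, one_mul]
      _ = 1 := hU
  -- conclude
  rw [hAinv]
  calc U * Matrix.diagonal (fun i => (hA.eigenvalues i : ℂ)⁻¹) * star U
      = U * Matrix.diagonal (fun i => ∫ s in Set.Ioi (0:ℝ), ηhat (hA.eigenvalues i * s)) * star U := by
        have : (fun i => ∫ s in Set.Ioi (0:ℝ), ηhat (hA.eigenvalues i * s))
            = fun i => (hA.eigenvalues i : ℂ)⁻¹ := funext fun i => hIoi i
        rw [this]
    _ = ∫ s in Set.Ioi (0:ℝ), U * Matrix.diagonal (fun i => ηhat (hA.eigenvalues i * s)) * star U := by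
        rw [integral_conj_diag U (star U) _ hgInt']
    _ = _ := by
        refine setIntegral_congr_fun measurableSet_Ioi fun s _ => ?_
        rw [hF s]
end

section
/- Let A be an N×N invertible Hermitian complex matrix, and let φ(k) = (i/√(2π)) k e^{-k²/2}. Then A^{-1} = ∫_0^∞ ∫_ℝ φ(k) e^{-i k A s} dk ds, where e^{-i k A s} is the matrix exponential and both iterated integrals converge (the inner as a Bochner integral over ℝ, the outer as an improper integral over [0, ∞)). -/
open MeasureTheory Filter Matrix

attribute [local instance] Matrix.normedAddCommGroup Matrix.normedSpace

lemma myInt {g : ℝ → ℂ} (hg : Continuous g) (C : ℝ)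
    (hC : ∀ k : ℝ, ‖g k‖ ≤ C * ((|k| + 1) * Real.exp (-k ^ 2 / 2))) : Integrable g := by
  have h1 : Integrable (fun k : ℝ => |k| * Real.exp (-k ^ 2 / 2)) := by
    have h := (integrable_mul_exp_neg_mul_sq (b := 1/2) (by norm_num)).abs
    refine h.congr (ae_of_all _ fun x => ?_)
    simp only [abs_mul, abs_of_pos (Real.exp_pos _)]
    ring_nf
  have h2 : Integrable (fun k : ℝ => Real.exp (-k ^ 2 / 2)) := by
    have h := integrable_exp_neg_mul_sq (b := 1/2) (by norm_num)
    refine h.congr (ae_of_all _ fun x => ?_)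
    ring_nf
  refine Integrable.mono' (((h1.add h2).const_mul C)) hg.aestronglyMeasurable
    (ae_of_all _ fun k => ?_)
  calc ‖g k‖ ≤ C * ((|k| + 1) * Real.exp (-k ^ 2 / 2)) := hC k
    _ = C * (|k| * Real.exp (-k ^ 2 / 2) + Real.exp (-k ^ 2 / 2)) := by ring

lemma norm_cexp_eq (z : ℂ) : ‖Complex.exp z‖ = Real.exp z.re := by
  simp [Complex.norm_exp]

lemma gauss_ft (t : ℝ) :
    ∫ k : ℝ, Complex.exp (-(Complex.I * t) * k) * Complex.exp (-(k : ℂ) ^ 2 / 2)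
      = (Real.sqrt (2 * Real.pi) : ℂ) * Complex.exp (-(t : ℂ) ^ 2 / 2) := by
  have h := fourierIntegral_gaussian (b := (1/2 : ℂ)) (by norm_num) (-(t : ℂ))
  have h2 : (fun x : ℝ => Complex.exp (Complex.I * (-(t:ℂ)) * x) * Complex.exp (-(1/2 : ℂ) * x ^ 2))
      = fun x : ℝ => Complex.exp (-(Complex.I * t) * x) * Complex.exp (-(x : ℂ) ^ 2 / 2) := by
    funext x; ring_nf
  rw [h2] at h
  rw [h]
  have h3 : ((Real.pi : ℂ) / (1/2)) = ((2 * Real.pi : ℝ) : ℂ) := by push_cast; ring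
  rw [h3]
  have h4 : ((2 * Real.pi : ℝ) : ℂ) ^ (1/2 : ℂ) = ((Real.sqrt (2 * Real.pi) : ℝ) : ℂ) := by
    rw [Real.sqrt_eq_rpow]
    rw [Complex.ofReal_cpow (by positivity)]
    norm_num
  rw [h4]
  congr 1
  congr 1
  ring

lemma parts_int (t : ℝ) :
    ∫ k : ℝ, Complex.exp (-(Complex.I * t) * k) * ((k : ℂ) * Complex.exp (-(k : ℂ) ^ 2 / 2))
      = -(Complex.I * t) * ((Real.sqrt (2 * Real.pi) : ℂ) * Complex.exp (-(t : ℂ) ^ 2 / 2)) := by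
  set u : ℝ → ℂ := fun k => Complex.exp (-(Complex.I * t) * k) with hu_def
  set v : ℝ → ℂ := fun k => -Complex.exp (-(k : ℂ) ^ 2 / 2) with hv_def
  set u' : ℝ → ℂ := fun k => -(Complex.I * t) * Complex.exp (-(Complex.I * t) * k) with hu'_def
  set v' : ℝ → ℂ := fun k => (k : ℂ) * Complex.exp (-(k : ℂ) ^ 2 / 2) with hv'_def
  have e1 : ∀ k : ℝ, ‖Complex.exp (-(Complex.I * t) * k)‖ = 1 := by
    intro k; rw [norm_cexp_eq]; simp [Complex.mul_re, Complex.mul_im]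
  have e2 : ∀ k : ℝ, ‖Complex.exp (-(k:ℂ) ^ 2 / 2)‖ = Real.exp (-k ^ 2 / 2) := by
    intro k; rw [norm_cexp_eq]; norm_num [Complex.div_re, ← Complex.ofReal_pow]
  have hu : ∀ x : ℝ, HasDerivAt u (u' x) x := by
    intro x
    have h1 : HasDerivAt (fun z : ℂ => -(Complex.I * t) * z) (-(Complex.I * t)) (x:ℂ) := by
      simpa using (hasDerivAt_id (x:ℂ)).const_mul (-(Complex.I * t))
    have h3 := h1.cexp.comp_ofReal
    convert h3 using 1
    ring
  have hv : ∀ x : ℝ, HasDerivAt v (v' x) x := by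
    intro x
    have h1 : HasDerivAt (fun z : ℂ => -z ^ 2 / 2) (-(x:ℂ)) (x : ℂ) := by
      have := (hasDerivAt_pow 2 (x:ℂ)).neg.div_const 2
      refine this.congr_deriv ?_
      push_cast
      ring
    have h2 := h1.cexp.neg.comp_ofReal
    refine h2.congr_deriv ?_
    simp [v']
    ring
  have huv' : Integrable (u * v') := by
    have hc : Continuous (u * v') := by
      have : (u * v') = fun k => u k * v' k := rfl
      rw [this, hu_def, hv'_def]; fun_prop
    refine myInt hc 1 fun k => ?_
    show ‖u k * v' k‖ ≤ _
    simp only [hu_def, hv'_def, norm_mul, e1, one_mul, e2, Complex.norm_real,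
      Real.norm_eq_abs]
    have h := Real.exp_pos (-k ^ 2 / 2)
    nlinarith [abs_nonneg k]
  have hu'v : Integrable (u' * v) := by
    have hc : Continuous (u' * v) := by
      have : (u' * v) = fun k => u' k * v k := rfl
      rw [this, hu'_def, hv_def]; fun_prop
    refine myInt hc ‖Complex.I * (t:ℂ)‖ fun k => ?_
    show ‖u' k * v k‖ ≤ _
    simp only [hu'_def, hv_def, norm_mul, norm_neg, e1, e2, mul_one]
    rw [← norm_mul]
    have h := Real.exp_pos (-k ^ 2 / 2)
    nlinarith [mul_nonneg (mul_nonneg (norm_nonneg (Complex.I * (t:ℂ)))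
      (Real.exp_pos (-k ^ 2 / 2)).le) (abs_nonneg k)]
  have huv : Integrable (u * v) := by
    have hc : Continuous (u * v) := by
      have : (u * v) = fun k => u k * v k := rfl
      rw [this, hu_def, hv_def]; fun_prop
    refine myInt hc 1 fun k => ?_
    show ‖u k * v k‖ ≤ _
    simp only [hu_def, hv_def, norm_mul, norm_neg, e1, e2, one_mul]
    have h := Real.exp_pos (-k ^ 2 / 2)
    nlinarith [abs_nonneg k]
  have key := integral_mul_deriv_eq_deriv_mul_of_integrable (fun x _ => hu x) (fun x _ => hv x) huv' hu'v huv
  show ∫ k : ℝ, u k * v' k = _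
  rw [key]
  have heq : (fun x : ℝ => u' x * v x)
      = fun x : ℝ => -(Complex.I * t) * -(Complex.exp (-(Complex.I * t) * x) * Complex.exp (-(x : ℂ) ^ 2 / 2)) := by
    funext x; rw [hu'_def, hv_def]; ring
  rw [show (∫ x : ℝ, u' x * v x) = ∫ x : ℝ, -(Complex.I * t) *
      -(Complex.exp (-(Complex.I * t) * x) * Complex.exp (-(x : ℂ) ^ 2 / 2)) from by rw [heq],
    MeasureTheory.integral_const_mul]
  rw [MeasureTheory.integral_neg, gauss_ft]
  ring

lemma integrable_inner (s m : ℝ) :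
    Integrable (fun k : ℝ =>
      (Complex.I / (Real.sqrt (2 * Real.pi) : ℂ) * k * Complex.exp (-(k : ℂ) ^ 2 / 2)) *
        Complex.exp (-(Complex.I * k * s) * m)) := by
  refine myInt (by fun_prop) ‖Complex.I / (Real.sqrt (2 * Real.pi) : ℂ)‖ fun k => ?_
  have e1 : ‖Complex.exp (-(Complex.I * k * s) * m)‖ = 1 := by
    rw [norm_cexp_eq]; simp [Complex.mul_re, Complex.mul_im]
  have e2 : ‖Complex.exp (-(k:ℂ) ^ 2 / 2)‖ = Real.exp (-k ^ 2 / 2) := by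
    rw [norm_cexp_eq]; norm_num [Complex.div_re, ← Complex.ofReal_pow]
  rw [norm_mul, norm_mul, norm_mul, e1, e2, mul_one, Complex.norm_real, Real.norm_eq_abs]
  have h := Real.exp_pos (-k ^ 2 / 2)
  nlinarith [norm_nonneg (Complex.I / (Real.sqrt (2 * Real.pi) : ℂ)), abs_nonneg k]

lemma scalar_int (s m : ℝ) :
    ∫ k : ℝ, (Complex.I / (Real.sqrt (2 * Real.pi) : ℂ) * k * Complex.exp (-(k : ℂ) ^ 2 / 2)) *
        Complex.exp (-(Complex.I * k * s) * m)
      = ((s * m : ℝ) : ℂ) * Complex.exp (-((s * m : ℝ) : ℂ) ^ 2 / 2) := by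
  have hsqrt : ((Real.sqrt (2 * Real.pi) : ℝ) : ℂ) ≠ 0 := by
    simp only [ne_eq, Complex.ofReal_eq_zero]
    positivity
  have heq : (fun k : ℝ => (Complex.I / (Real.sqrt (2 * Real.pi) : ℂ) * k *
        Complex.exp (-(k : ℂ) ^ 2 / 2)) * Complex.exp (-(Complex.I * k * s) * m))
      = fun k : ℝ => Complex.I / (Real.sqrt (2 * Real.pi) : ℂ) *
        (Complex.exp (-(Complex.I * (s * m : ℝ)) * k) * ((k : ℂ) * Complex.exp (-(k : ℂ) ^ 2 / 2))) := by
    funext k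
    push_cast
    ring_nf
  rw [heq, MeasureTheory.integral_const_mul, parts_int]
  rw [div_mul_eq_mul_div, div_eq_iff hsqrt]
  push_cast
  ring_nf
  rw [Complex.I_sq]
  ring

lemma outer_tendsto (m : ℝ) (hm : m ≠ 0) :
    Tendsto (fun T : ℝ => ∫ s in (0:ℝ)..T,
        ((s * m : ℝ) : ℂ) * Complex.exp (-((s * m : ℝ) : ℂ) ^ 2 / 2))
      atTop (nhds ((m : ℂ)⁻¹)) := by
  have hmc : (m : ℂ) ≠ 0 := Complex.ofReal_ne_zero.mpr hm
  set F : ℝ → ℂ := fun s => -(m : ℂ)⁻¹ * Complex.exp (-((s * m : ℝ) : ℂ) ^ 2 / 2) with hF_def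
  have hF : ∀ s : ℝ, HasDerivAt F (((s * m : ℝ) : ℂ) * Complex.exp (-((s * m : ℝ) : ℂ) ^ 2 / 2)) s := by
    intro s
    have h1 : HasDerivAt (fun z : ℂ => -(z * (m:ℂ)) ^ 2 / 2) (((-(s * m * m) : ℝ) : ℂ)) (s : ℂ) := by
      have h0 := (((hasDerivAt_id (s:ℂ)).mul_const ((m:ℂ))).pow 2).neg.div_const 2
      simp only [id_eq] at h0
      refine h0.congr_deriv ?_
      push_cast
      ring
    have h2 := (h1.cexp.const_mul (-(m : ℂ)⁻¹)).comp_ofReal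
    have h3 : F =ᶠ[nhds s] (fun x : ℝ => -(m:ℂ)⁻¹ * Complex.exp (-((x:ℂ) * (m:ℂ)) ^ 2 / 2)) := by
      filter_upwards with x
      rw [hF_def]
      push_cast
      ring_nf
    have h4 := h2.congr_of_eventuallyEq h3
    refine h4.congr_deriv ?_
    push_cast
    field_simp
  have hcont : Continuous fun s : ℝ => ((s * m : ℝ) : ℂ) * Complex.exp (-((s * m : ℝ) : ℂ) ^ 2 / 2) := by
    fun_prop
  have hint : ∀ T : ℝ, (∫ s in (0:ℝ)..T, ((s * m : ℝ) : ℂ) * Complex.exp (-((s * m : ℝ) : ℂ) ^ 2 / 2))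
      = F T - F 0 := by
    intro T
    exact intervalIntegral.integral_eq_sub_of_hasDerivAt (fun x _ => hF x)
      (hcont.intervalIntegrable 0 T)
  simp only [hint]
  have hF0 : F 0 = -(m : ℂ)⁻¹ := by
    simp [hF_def]
  rw [hF0]
  have key : Tendsto (fun T : ℝ => Complex.exp (-((T * m : ℝ) : ℂ) ^ 2 / 2)) atTop (nhds 0) := by
    have hcast : ∀ T : ℝ, Complex.exp (-((T * m : ℝ) : ℂ) ^ 2 / 2)
        = ((Real.exp (-(m ^ 2 / 2) * T ^ 2) : ℝ) : ℂ) := by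
      intro T
      rw [show -((T * m : ℝ) : ℂ) ^ 2 / 2 = ((-(m ^ 2 / 2) * T ^ 2 : ℝ) : ℂ) by push_cast; ring,
        ← Complex.ofReal_exp]
    simp only [hcast]
    rw [show ((0:ℂ)) = ((0:ℝ):ℂ) by norm_num]
    apply Tendsto.comp (Complex.continuous_ofReal.tendsto 0)
    apply Real.tendsto_exp_atBot.comp
    apply Tendsto.const_mul_atTop_of_neg
    · have : (0:ℝ) < m ^ 2 / 2 := by positivity
      linarith
    · exact tendsto_pow_atTop two_ne_zero
  have := ((key.const_mul (-(m : ℂ)⁻¹)).sub_const (-(m : ℂ)⁻¹))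
  simp only [mul_zero, zero_sub, neg_neg] at this
  convert this using 2 with T

/-- For an `N×N` invertible Hermitian complex matrix `A` and the kernel
`φ(k) = (i/√(2π)) k e^{-k²/2}`, one has `A⁻¹ = ∫_0^∞ ∫_ℝ φ(k) e^{-ikAs} dk ds`, where both
iterated integrals converge (the inner as a Bochner integral over `ℝ`, the outer as an
improper integral over `[0,∞)`). -/
theorem stmt_1 {N : ℕ} (A : Matrix (Fin N) (Fin N) ℂ) (hA : A.IsHermitian)
    (hInv : IsUnit A.det) :
    (∀ s : ℝ, @Integrable _ _ SeminormedAddGroup.toContinuousENorm _ _ (fun k : ℝ =>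
        (Complex.I / (Real.sqrt (2 * Real.pi) : ℂ) * k * Complex.exp (-(k : ℂ) ^ 2 / 2)) •
          NormedSpace.exp ((-(Complex.I * k * s)) • A)) volume) ∧
    Tendsto (fun T : ℝ => ∫ s in (0:ℝ)..T, ∫ k : ℝ,
        (Complex.I / (Real.sqrt (2 * Real.pi) : ℂ) * k * Complex.exp (-(k : ℂ) ^ 2 / 2)) •
          NormedSpace.exp ((-(Complex.I * k * s)) • A))
      atTop (nhds A⁻¹) := by
  classical
  set U : Matrix (Fin N) (Fin N) ℂ := (hA.eigenvectorUnitary : Matrix (Fin N) (Fin N) ℂ)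
    with hU_def
  set μ : Fin N → ℝ := hA.eigenvalues with hμ_def
  have hU2 : U * star U = 1 := (Matrix.mem_unitaryGroup_iff).mp hA.eigenvectorUnitary.2
  have hU1 : star U * U = 1 := (Matrix.mem_unitaryGroup_iff').mp hA.eigenvectorUnitary.2
  have hUunit : IsUnit U := ⟨⟨U, star U, hU2, hU1⟩, rfl⟩
  have hUinv : U⁻¹ = star U := Matrix.inv_eq_right_inv hU2
  have hμ0 : ∀ i, μ i ≠ 0 := by
    intro i h0
    have hdet := hA.det_eq_prod_eigenvalues
    rw [isUnit_iff_ne_zero, hdet] at hInv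
    refine hInv (Finset.prod_eq_zero (Finset.mem_univ i) ?_)
    show ((μ i : ℝ) : ℂ) = 0
    rw [h0]; norm_num
  set Mi : Fin N → Matrix (Fin N) (Fin N) ℂ :=
    fun i => U * Matrix.diagonal (Pi.single i 1) * star U with hMi_def
  have keydiag : ∀ c : Fin N → ℂ, U * Matrix.diagonal c * star U = ∑ i, c i • Mi i := by
    intro c
    have h : Matrix.diagonal c = ∑ i, c i • Matrix.diagonal (Pi.single i (1:ℂ)) := by
      ext j l
      by_cases hjl : j = l
      · subst hjl
        simp [Matrix.sum_apply, Matrix.diagonal_apply, Pi.single_apply]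
      · simp [Matrix.sum_apply, Matrix.diagonal_apply_ne _ hjl, hjl]
    rw [h, Finset.mul_sum, Finset.sum_mul]
    refine Finset.sum_congr rfl fun i _ => ?_
    rw [Matrix.mul_smul, Matrix.smul_mul]
  have hofReal : ((RCLike.ofReal : ℝ → ℂ) ∘ μ) = fun i => ((μ i : ℝ) : ℂ) := rfl
  have hexp : ∀ c : ℂ, NormedSpace.exp (c • A)
      = U * Matrix.diagonal (fun i => Complex.exp (c * μ i)) * star U := by
    intro c
    have h1 : c • A = U * Matrix.diagonal (fun i => c * (μ i : ℂ)) * U⁻¹ := by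
      rw [hUinv]
      conv_lhs => rw [hA.spectral_theorem, Unitary.conjStarAlgAut_apply]
      rw [← hU_def]
      have hc : (fun i => c * ((μ i : ℝ) : ℂ)) = c • ((RCLike.ofReal : ℝ → ℂ) ∘ μ) := by
        funext i; simp [smul_eq_mul]
      rw [hc, Matrix.diagonal_smul, mul_smul_comm, smul_mul_assoc]
    rw [h1, Matrix.exp_conj U _ hUunit, Matrix.exp_diagonal, hUinv]
    congr 2
    funext i
    rw [Pi.exp_def, ← Complex.exp_eq_exp_ℂ]
  have key : ∀ (s k : ℝ),
      (Complex.I / (Real.sqrt (2 * Real.pi) : ℂ) * k * Complex.exp (-(k : ℂ) ^ 2 / 2)) •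
          NormedSpace.exp ((-(Complex.I * k * s)) • A)
        = ∑ i, ((Complex.I / (Real.sqrt (2 * Real.pi) : ℂ) * k * Complex.exp (-(k : ℂ) ^ 2 / 2)) *
            Complex.exp (-(Complex.I * k * s) * μ i)) • Mi i := by
    intro s k
    rw [hexp, keydiag, Finset.smul_sum]
    refine Finset.sum_congr rfl fun i _ => ?_
    rw [smul_smul]
  have habs : ∀ s : ℝ, @Integrable _ _ SeminormedAddGroup.toContinuousENorm _ _ (fun k : ℝ =>
      (Complex.I / (Real.sqrt (2 * Real.pi) : ℂ) * k * Complex.exp (-(k : ℂ) ^ 2 / 2)) •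
        NormedSpace.exp ((-(Complex.I * k * s)) • A)) volume := by
    intro s
    have h : (fun k : ℝ =>
        (Complex.I / (Real.sqrt (2 * Real.pi) : ℂ) * k * Complex.exp (-(k : ℂ) ^ 2 / 2)) •
          NormedSpace.exp ((-(Complex.I * k * s)) • A))
        = fun k : ℝ => ∑ i, ((Complex.I / (Real.sqrt (2 * Real.pi) : ℂ) * k *
            Complex.exp (-(k : ℂ) ^ 2 / 2)) * Complex.exp (-(Complex.I * k * s) * μ i)) • Mi i :=
      funext fun k => key s k
    rw [h]
    exact integrable_finset_sum _ fun i _ => (integrable_inner s (μ i)).smul_const (Mi i)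
  refine ⟨habs, ?_⟩
  have hIval : ∀ s : ℝ, (∫ k : ℝ,
      (Complex.I / (Real.sqrt (2 * Real.pi) : ℂ) * k * Complex.exp (-(k : ℂ) ^ 2 / 2)) •
        NormedSpace.exp ((-(Complex.I * k * s)) • A))
      = ∑ i, (((s * μ i : ℝ) : ℂ) * Complex.exp (-((s * μ i : ℝ) : ℂ) ^ 2 / 2)) • Mi i := by
    intro s
    simp_rw [key s]
    rw [MeasureTheory.integral_finset_sum _ fun i _ =>
      (integrable_inner s (μ i)).smul_const (Mi i)]
    refine Finset.sum_congr rfl fun i _ => ?_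
    rw [integral_smul_const, scalar_int]
  simp_rw [hIval]
  have hcont : ∀ i : Fin N, Continuous fun s : ℝ =>
      ((s * μ i : ℝ) : ℂ) * Complex.exp (-((s * μ i : ℝ) : ℂ) ^ 2 / 2) := by
    intro i; fun_prop
  have houter : ∀ T : ℝ, (∫ s in (0:ℝ)..T,
      ∑ i, (((s * μ i : ℝ) : ℂ) * Complex.exp (-((s * μ i : ℝ) : ℂ) ^ 2 / 2)) • Mi i)
      = ∑ i, (∫ s in (0:ℝ)..T,
          ((s * μ i : ℝ) : ℂ) * Complex.exp (-((s * μ i : ℝ) : ℂ) ^ 2 / 2)) • Mi i := by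
    intro T
    rw [intervalIntegral.integral_finset_sum (f := fun i (s : ℝ) => (((s * μ i : ℝ) : ℂ) *
        Complex.exp (-((s * μ i : ℝ) : ℂ) ^ 2 / 2)) • Mi i) fun i _ =>
      ((((hcont i).smul continuous_const)).intervalIntegrable 0 T)]
    refine Finset.sum_congr rfl fun i _ => ?_
    rw [intervalIntegral.integral_smul_const]
  simp_rw [houter]
  have hAinv : A⁻¹ = ∑ i, ((μ i : ℂ))⁻¹ • Mi i := by
    rw [← keydiag]
    refine Matrix.inv_eq_right_inv ?_
    conv_lhs => rw [hA.spectral_theorem, Unitary.conjStarAlgAut_apply]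
    rw [hofReal]
    calc (U * Matrix.diagonal (fun i => ((μ i : ℝ) : ℂ)) * star U) *
          (U * Matrix.diagonal (fun i => ((μ i : ℂ))⁻¹) * star U)
        = U * (Matrix.diagonal (fun i => ((μ i : ℝ) : ℂ)) * (star U * U) *
            Matrix.diagonal (fun i => ((μ i : ℂ))⁻¹)) * star U := by
          simp only [Matrix.mul_assoc]
      _ = U * star U := by
          rw [hU1, Matrix.mul_one, Matrix.diagonal_mul_diagonal]
          have : (fun i => ((μ i : ℝ) : ℂ) * ((μ i : ℂ))⁻¹) = fun _ => (1:ℂ) := by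
            funext i
            exact mul_inv_cancel₀ (Complex.ofReal_ne_zero.mpr (hμ0 i))
          rw [this, Matrix.diagonal_one, Matrix.mul_one]
      _ = 1 := hU2
  rw [hAinv]
  exact tendsto_finset_sum _ fun i _ => (outer_tendsto (μ i) (hμ0 i)).smul_const (Mi i)
end

section
/- Let A be an N×N Hermitian complex matrix, φ(k) = (i/√(2π)) k e^{-k²/2}, and let t, p be real numbers. Then ∫_ℝ φ(k) e^{-i k p} e^{-i k A t} dk = (p I + t A) · exp(-(p I + t A)²/2), where e^{-i k A t} and exp denote matrix exponentials and the integral is an entrywise (Bochner) integral. -/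
open MeasureTheory Matrix

attribute [local instance] Matrix.normedAddCommGroup Matrix.normedSpace

noncomputable def hfun (s : ℝ) (k : ℝ) : ℂ := Complex.exp (-(k:ℂ)^2/2 - Complex.I*k*s)

lemma hfun_deriv (s : ℝ) (k : ℝ) :
    HasDerivAt (hfun s) ((-(k:ℂ) - Complex.I*s) * hfun s k) k := by
  have h1 : HasDerivAt (fun z : ℂ => -z^2/2 - Complex.I*z*s) (-(k:ℂ) - Complex.I*s) (k:ℂ) := by
    have h0 := (((hasDerivAt_pow 2 (k:ℂ)).neg.div_const 2).sub
      (((hasDerivAt_id (k:ℂ)).const_mul Complex.I).mul_const (s:ℂ)))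
    refine h0.congr_deriv ?_
    push_cast; ring
  have := (h1.cexp).comp_ofReal
  unfold hfun
  simpa [mul_comm] using this

lemma hfun_norm (s : ℝ) (k : ℝ) : ‖hfun s k‖ = Real.exp (-(k^2)/2) := by
  have h : (-(k:ℂ)^2/2 - Complex.I*k*s) = ((-(k^2)/2 : ℝ) : ℂ) + ((-(k*s) : ℝ) : ℂ) * Complex.I := by
    push_cast; ring
  rw [hfun, h, Complex.norm_exp]
  simp [← Complex.ofReal_pow]

lemma hfun_tendsto_top (s : ℝ) : Filter.Tendsto (hfun s) Filter.atTop (nhds 0) := by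
  rw [tendsto_zero_iff_norm_tendsto_zero]
  simp only [hfun_norm]
  apply Real.tendsto_exp_atBot.comp
  have h1 : Filter.Tendsto (fun k : ℝ => k^2) Filter.atTop Filter.atTop :=
    Filter.tendsto_pow_atTop two_ne_zero
  exact (Filter.tendsto_neg_atTop_atBot.comp h1).atBot_div_const (by norm_num)

lemma hfun_tendsto_bot (s : ℝ) : Filter.Tendsto (hfun s) Filter.atBot (nhds 0) := by
  rw [tendsto_zero_iff_norm_tendsto_zero]
  simp only [hfun_norm]
  apply Real.tendsto_exp_atBot.comp
  have h1 : Filter.Tendsto (fun k : ℝ => k^2) Filter.atBot Filter.atTop := by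
    have := (Filter.tendsto_pow_atTop (two_ne_zero)).comp (Filter.tendsto_neg_atBot_atTop (G := ℝ))
    simpa [Function.comp_def] using this
  exact (Filter.tendsto_neg_atTop_atBot.comp h1).atBot_div_const (by norm_num)

lemma integrable_gauss : Integrable (fun k : ℝ => Real.exp (-(k^2)/2)) := by
  have := integrable_exp_neg_mul_sq (b := (1/2 : ℝ)) (by norm_num)
  refine this.congr ?_
  filter_upwards with x
  ring_nf

lemma integrable_abs_gauss : Integrable (fun k : ℝ => |k| * Real.exp (-(k^2)/2)) := by
  have := (integrable_mul_exp_neg_mul_sq (b := (1/2 : ℝ)) (by norm_num)).abs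
  refine this.congr ?_
  filter_upwards with x
  rw [abs_mul, Real.abs_exp]
  ring_nf

lemma hfun_cont (s : ℝ) : Continuous (hfun s) := by
  unfold hfun; fun_prop

lemma integrable_hfun (s : ℝ) : Integrable (hfun s) := by
  refine (integrable_gauss.mono' ((hfun_cont s).aestronglyMeasurable) ?_)
  filter_upwards with k
  rw [hfun_norm]

lemma integrable_mul_hfun (s : ℝ) : Integrable (fun k : ℝ => (k:ℂ) * hfun s k) := by
  refine (integrable_abs_gauss.mono' ((Continuous.mul (by fun_prop) (hfun_cont s)).aestronglyMeasurable) ?_)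
  filter_upwards with k
  rw [norm_mul, hfun_norm]
  simp

lemma integrable_hfun_deriv (s : ℝ) :
    Integrable (fun k : ℝ => (-(k:ℂ) - Complex.I*s) * hfun s k) := by
  have hb : Integrable (fun k : ℝ => (|k| + |s|) * Real.exp (-(k^2)/2)) := by
    simp_rw [add_mul]
    exact integrable_abs_gauss.add (integrable_gauss.const_mul _)
  refine hb.mono' ((Continuous.mul (by fun_prop) (hfun_cont s)).aestronglyMeasurable) ?_
  filter_upwards with k
  rw [norm_mul, hfun_norm]
  gcongr
  calc ‖-(k:ℂ) - Complex.I*s‖ ≤ ‖-(k:ℂ)‖ + ‖Complex.I*(s:ℂ)‖ := norm_sub_le _ _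
  _ = |k| + |s| := by simp

lemma integral_hfun (s : ℝ) :
    ∫ k : ℝ, hfun s k = (Real.sqrt (2*Real.pi) : ℂ) * Complex.exp (-(s:ℂ)^2/2) := by
  have h := integral_cexp_quadratic (b := (-(1/2) : ℂ)) (by norm_num) (-(Complex.I*s)) 0
  have h2 : ∀ k : ℝ, (-(1/2) : ℂ) * k^2 + (-(Complex.I*s)) * k + 0 = -(k:ℂ)^2/2 - Complex.I*k*s := by
    intro k; ring
  simp_rw [h2] at h
  have h3 : ((Real.pi : ℂ) / -(-(1/2) : ℂ)) ^ (1/2 : ℂ) = (Real.sqrt (2*Real.pi) : ℂ) := by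
    have hb : ((Real.pi : ℂ) / -(-(1/2) : ℂ)) = ((2*Real.pi : ℝ) : ℂ) := by push_cast; ring
    rw [hb, Real.sqrt_eq_rpow, Complex.ofReal_cpow (by positivity)]
    norm_num
  have h4 : (0 : ℂ) - (-(Complex.I*s))^2/(4 * (-(1/2) : ℂ)) = -(s:ℂ)^2/2 := by
    rw [neg_pow, mul_pow, Complex.I_sq]
    ring
  rw [show (fun k : ℝ => hfun s k) = fun k : ℝ => Complex.exp (-(k:ℂ)^2/2 - Complex.I*k*s) from rfl]
  rw [h, h3, h4]

lemma gauss_fourier (s : ℝ) :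
    ∫ k : ℝ, Complex.I / (Real.sqrt (2 * Real.pi) : ℂ) * k * Complex.exp (-(k : ℂ) ^ 2 / 2) *
      Complex.exp (-(Complex.I * k * s)) = (s:ℂ) * Complex.exp (-(s:ℂ)^2/2) := by
  have hzero : ∫ k : ℝ, (-(k:ℂ) - Complex.I*s) * hfun s k = 0 := by
    have := integral_of_hasDerivAt_of_tendsto (hfun_deriv s) (integrable_hfun_deriv s)
      (hfun_tendsto_bot s) (hfun_tendsto_top s)
    simpa using this
  have hsplit : ∫ k : ℝ, (-(k:ℂ) - Complex.I*s) * hfun s k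
      = -(∫ k : ℝ, (k:ℂ) * hfun s k) + (-(Complex.I*s)) * ∫ k : ℝ, hfun s k := by
    rw [show (fun k:ℝ => (-(k:ℂ) - Complex.I*s) * hfun s k)
        = fun k:ℝ => (-(Complex.I*s)) * hfun s k - (k:ℂ) * hfun s k from by funext k; ring]
    rw [integral_sub ((integrable_hfun s).const_mul _) (integrable_mul_hfun s),
      integral_const_mul]
    ring
  have h5 : -(∫ k : ℝ, (k:ℂ) * hfun s k) + (-(Complex.I*s)) *
      ((Real.sqrt (2*Real.pi) : ℂ) * Complex.exp (-(s:ℂ)^2/2)) = 0 := by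
    rw [← integral_hfun s, ← hsplit]; exact hzero
  have hk : ∫ k : ℝ, (k:ℂ) * hfun s k
      = -(Complex.I*s) * ((Real.sqrt (2*Real.pi) : ℂ) * Complex.exp (-(s:ℂ)^2/2)) := by
    linear_combination -h5
  have hne : ((Real.sqrt (2*Real.pi) : ℝ) : ℂ) ≠ 0 := by
    rw [Complex.ofReal_ne_zero, Real.sqrt_ne_zero']
    positivity
  calc ∫ k : ℝ, Complex.I / (Real.sqrt (2 * Real.pi) : ℂ) * k * Complex.exp (-(k : ℂ) ^ 2 / 2) *
      Complex.exp (-(Complex.I * k * s))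
      = ∫ k : ℝ, Complex.I / (Real.sqrt (2 * Real.pi) : ℂ) * ((k:ℂ) * hfun s k) := by
        congr 1; funext k
        unfold hfun
        rw [show -(k:ℂ)^2/2 - Complex.I*k*s = -(k:ℂ)^2/2 + -(Complex.I*k*s) from by ring,
          Complex.exp_add]
        ring
    _ = Complex.I / (Real.sqrt (2 * Real.pi) : ℂ) * ∫ k : ℝ, (k:ℂ) * hfun s k :=
        integral_const_mul _ _
    _ = (s:ℂ) * Complex.exp (-(s:ℂ)^2/2) := by
        rw [hk]
        have hstep : Complex.I / (Real.sqrt (2 * Real.pi) : ℂ) *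
            (-(Complex.I*s) * ((Real.sqrt (2*Real.pi) : ℂ) * Complex.exp (-(s:ℂ)^2/2)))
            = (-(Complex.I^2)) * s * Complex.exp (-(s:ℂ)^2/2) *
              ((Real.sqrt (2*Real.pi) : ℂ) / (Real.sqrt (2*Real.pi) : ℂ)) := by ring
        rw [hstep, div_self hne, Complex.I_sq]
        ring


section aux
variable {N : ℕ}

noncomputable def conjCLM (U : Matrix (Fin N) (Fin N) ℂ) :
    (Fin N → ℂ) →L[ℂ] Matrix (Fin N) (Fin N) ℂ :=
  LinearMap.toContinuousLinearMap
  { toFun := fun v => U * Matrix.diagonal v * star U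
    map_add' := fun v w => by
      show U * Matrix.diagonal (v + w) * star U
        = U * Matrix.diagonal v * star U + U * Matrix.diagonal w * star U
      have h : Matrix.diagonal (v + w) = Matrix.diagonal v + Matrix.diagonal w := by
        rw [diagonal_add]; rfl
      rw [h, Matrix.mul_add, Matrix.add_mul]
    map_smul' := fun c v => by simp only [diagonal_smul, Matrix.mul_smul, Matrix.smul_mul, RingHom.id_apply] }

lemma conjCLM_apply (U : Matrix (Fin N) (Fin N) ℂ) (v : Fin N → ℂ) :
    conjCLM U v = U * Matrix.diagonal v * star U := rfl

lemma conj_mul_conj {U : Matrix (Fin N) (Fin N) ℂ} (hsUU : star U * U = 1)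
    (v w : Fin N → ℂ) :
    (U * diagonal v * star U) * (U * diagonal w * star U)
      = U * diagonal (fun j => v j * w j) * star U := by
  calc (U * diagonal v * star U) * (U * diagonal w * star U)
      = U * diagonal v * ((star U * U) * (diagonal w * star U)) := by
        simp only [Matrix.mul_assoc]
    _ = U * (diagonal v * diagonal w) * star U := by
        rw [hsUU, one_mul]; simp only [Matrix.mul_assoc]
    _ = U * diagonal (fun j => v j * w j) * star U := by
        rw [diagonal_mul_diagonal]

lemma smul_conj (U : Matrix (Fin N) (Fin N) ℂ) (c : ℂ) (D : Matrix (Fin N) (Fin N) ℂ) :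
    c • (U * D * star U) = U * (c • D) * star U := by
  rw [Matrix.mul_smul, Matrix.smul_mul]

lemma exp_conj_diag {A : Matrix (Fin N) (Fin N) ℂ} (hA : A.IsHermitian)
    (v : Fin N → ℂ) :
    NormedSpace.exp ((hA.eigenvectorUnitary : Matrix (Fin N) (Fin N) ℂ) * diagonal v *
        star (hA.eigenvectorUnitary : Matrix (Fin N) (Fin N) ℂ))
      = (hA.eigenvectorUnitary : Matrix (Fin N) (Fin N) ℂ) *
          diagonal (fun j => Complex.exp (v j)) *
          star (hA.eigenvectorUnitary : Matrix (Fin N) (Fin N) ℂ) := by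
  have hu := Matrix.exp_units_conj (Unitary.toUnits hA.eigenvectorUnitary) (diagonal v)
  have hcoeU : ((Unitary.toUnits hA.eigenvectorUnitary : (Matrix (Fin N) (Fin N) ℂ)ˣ) :
      Matrix (Fin N) (Fin N) ℂ) = (hA.eigenvectorUnitary : Matrix (Fin N) (Fin N) ℂ) := rfl
  have hcoeUinv : (((Unitary.toUnits hA.eigenvectorUnitary)⁻¹ : (Matrix (Fin N) (Fin N) ℂ)ˣ) :
      Matrix (Fin N) (Fin N) ℂ) = star (hA.eigenvectorUnitary : Matrix (Fin N) (Fin N) ℂ) := rfl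
  rw [hcoeU, hcoeUinv] at hu
  rw [hu, Matrix.exp_diagonal, Pi.exp_def]
  simp only [← Complex.exp_eq_exp_ℂ]

end aux


/-- For an `N×N` Hermitian complex matrix `A`, `φ(k) = (i/√(2π)) k e^{-k²/2}`,
and reals `t`, `p`:
`∫_ℝ φ(k) e^{-ikp} e^{-ikAt} dk = (p I + t A) exp(-(p I + t A)²/2)`. -/
theorem stmt_9 {N : ℕ} (A : Matrix (Fin N) (Fin N) ℂ) (hA : A.IsHermitian) (t p : ℝ) :
    ∫ k : ℝ,
        (Complex.I / (Real.sqrt (2 * Real.pi) : ℂ) * k * Complex.exp (-(k : ℂ) ^ 2 / 2) *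
          Complex.exp (-(Complex.I * k * p))) •
          NormedSpace.exp ((-(Complex.I * k * t)) • A)
      = ((p : ℂ) • (1 : Matrix (Fin N) (Fin N) ℂ) + (t : ℂ) • A) *
          NormedSpace.exp ((-(1 / 2 : ℂ)) •
            (((p : ℂ) • (1 : Matrix (Fin N) (Fin N) ℂ) + (t : ℂ) • A) *
             ((p : ℂ) • (1 : Matrix (Fin N) (Fin N) ℂ) + (t : ℂ) • A))) := by
  classical
  have hspec := hA.spectral_theorem
  rw [Unitary.conjStarAlgAut_apply] at hspec
  set U : Matrix (Fin N) (Fin N) ℂ := ↑(hA.eigenvectorUnitary) with hUdef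
  set d : Fin N → ℝ := hA.eigenvalues with hddef
  have hUU : U * star U = 1 := Unitary.coe_mul_star_self _
  have hsUU : star U * U = 1 := Unitary.coe_star_mul_self _
  set σ : Fin N → ℝ := fun j => p + t * d j with hσdef
  set g : ℝ → (Fin N → ℂ) := fun k j =>
    Complex.I / (Real.sqrt (2 * Real.pi) : ℂ) * k * Complex.exp (-(k : ℂ) ^ 2 / 2) *
      Complex.exp (-(Complex.I * k * ((σ j : ℝ) : ℂ))) with hgdef
  -- integrability of g
  have hg_int : Integrable g := by
    have hcont : Continuous g := by
      apply continuous_pi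
      intro j
      fun_prop
    have hb : Integrable (fun k : ℝ => (Real.sqrt (2*Real.pi))⁻¹ * (|k| * Real.exp (-(k^2)/2))) :=
      integrable_abs_gauss.const_mul _
    refine hb.mono' hcont.aestronglyMeasurable ?_
    filter_upwards with k
    rw [pi_norm_le_iff_of_nonneg (by positivity)]
    intro j
    have hnorm : ‖g k j‖ = (Real.sqrt (2*Real.pi))⁻¹ * (|k| * Real.exp (-(k^2)/2)) := by
      simp only [hgdef]
      have h1 : -(k:ℂ)^2/2 = ((-(k^2)/2 : ℝ) : ℂ) := by push_cast; ring
      have h2 : -(Complex.I * (k:ℂ) * ((σ j : ℝ) : ℂ))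
          = ((0:ℝ) : ℂ) + ((-(k * σ j) : ℝ) : ℂ) * Complex.I := by push_cast; ring
      rw [h1, h2, norm_mul, norm_mul, norm_mul, norm_div,
        Complex.norm_exp, Complex.norm_exp]
      simp only [Complex.add_re, Complex.ofReal_re, Complex.mul_re, Complex.I_re,
        Complex.ofReal_im, Complex.I_im, mul_zero, mul_one, zero_sub, zero_add]
      rw [Complex.norm_I, Complex.norm_real, Complex.norm_real,
        Real.norm_eq_abs, Real.norm_eq_abs, abs_of_nonneg (Real.sqrt_nonneg _)]
      rw [neg_zero, Real.exp_zero, mul_one, one_div]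
      ring
    rw [hnorm]
  -- coordinates of the integral of g
  have hint_coord : ∀ j, (∫ k : ℝ, g k) j = ((σ j : ℝ) : ℂ) *
      Complex.exp (-((σ j : ℝ) : ℂ)^2/2) := by
    intro j
    have h1 := (ContinuousLinearMap.proj (R := ℂ) (φ := fun _ : Fin N => ℂ) j)
      |>.integral_comp_comm hg_int
    simp only [ContinuousLinearMap.proj_apply] at h1
    rw [← h1, hgdef]
    exact gauss_fourier (σ j)
  -- rewriting the integrand
  have hexp : ∀ k : ℝ, NormedSpace.exp ((-(Complex.I * k * t)) • A)
      = U * diagonal (fun j => Complex.exp (-(Complex.I * k * t) * (d j : ℂ))) * star U := by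
    intro k
    have hdiag : ((-(Complex.I * k * t)) • A)
        = U * diagonal (fun j => -(Complex.I * k * t) * (d j : ℂ)) * star U := by
      conv_lhs => rw [hspec]
      rw [smul_conj, ← diagonal_smul]
      have hfe : ((-(Complex.I * k * t) : ℂ) • (RCLike.ofReal ∘ d) : Fin N → ℂ)
          = fun j => -(Complex.I * (k:ℂ) * (t:ℂ)) * ((d j : ℝ) : ℂ) := by
        funext j
        simp only [Pi.smul_apply, Function.comp_apply, smul_eq_mul]
        norm_cast
      rw [hfe]
    rw [hdiag, exp_conj_diag hA]
  have hrw : ∀ k : ℝ,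
      (Complex.I / (Real.sqrt (2 * Real.pi) : ℂ) * k * Complex.exp (-(k : ℂ) ^ 2 / 2) *
        Complex.exp (-(Complex.I * k * p))) • NormedSpace.exp ((-(Complex.I * k * t)) • A)
      = conjCLM U (g k) := by
    intro k
    rw [hexp k, smul_conj, ← diagonal_smul, conjCLM_apply]
    have hfe : ((Complex.I / (Real.sqrt (2 * Real.pi) : ℂ) * k * Complex.exp (-(k : ℂ) ^ 2 / 2) *
          Complex.exp (-(Complex.I * k * p))) •
          fun j => Complex.exp (-(Complex.I * (k:ℂ) * (t:ℂ)) * ((d j : ℝ) : ℂ))) = g k := by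
      funext j
      simp only [Pi.smul_apply, smul_eq_mul, hgdef]
      rw [show -(Complex.I * (k:ℂ) * ((σ j : ℝ) : ℂ))
          = -(Complex.I * (k:ℂ) * (p:ℂ)) + -(Complex.I * (k:ℂ) * (t:ℂ)) * ((d j : ℝ) : ℂ) from by
        simp only [hσdef]; push_cast; ring, Complex.exp_add]
      ring
    rw [hfe]
  -- RHS diagonalization
  have hBdiag : (p : ℂ) • (1 : Matrix (Fin N) (Fin N) ℂ) + (t : ℂ) • A
      = U * diagonal (fun j => ((σ j : ℝ) : ℂ)) * star U := by
    have h1 : diagonal (fun j => ((σ j : ℝ) : ℂ))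
        = (p : ℂ) • (1 : Matrix (Fin N) (Fin N) ℂ)
          + (t : ℂ) • diagonal (RCLike.ofReal ∘ d) := by
      ext i j
      by_cases h : i = j <;>
        simp [Matrix.diagonal_apply, Matrix.one_apply, h, hσdef] <;> push_cast <;> ring
    rw [h1, Matrix.mul_add, Matrix.add_mul]
    congr 1
    · rw [Matrix.mul_smul, Matrix.mul_one, Matrix.smul_mul, hUU]
    · rw [Matrix.mul_smul, Matrix.smul_mul, ← hspec]
  have hRHS : ((p : ℂ) • (1 : Matrix (Fin N) (Fin N) ℂ) + (t : ℂ) • A) *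
          NormedSpace.exp ((-(1 / 2 : ℂ)) •
            (((p : ℂ) • (1 : Matrix (Fin N) (Fin N) ℂ) + (t : ℂ) • A) *
             ((p : ℂ) • (1 : Matrix (Fin N) (Fin N) ℂ) + (t : ℂ) • A)))
      = conjCLM U (fun j => ((σ j : ℝ) : ℂ) * Complex.exp (-((σ j : ℝ) : ℂ)^2/2)) := by
    rw [hBdiag, conj_mul_conj hsUU, smul_conj, ← diagonal_smul]
    have h2 : ((-(1/2 : ℂ)) • fun j => ((σ j : ℝ) : ℂ) * ((σ j : ℝ) : ℂ))
        = fun j => (-(1/2 : ℂ)) * ((σ j : ℝ) : ℂ) * ((σ j : ℝ) : ℂ) := by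
      funext j; simp [smul_eq_mul]; ring
    rw [h2]
    rw [show (fun j => (-(1/2 : ℂ)) * ((σ j : ℝ) : ℂ) * ((σ j : ℝ) : ℂ)) =
      (fun j => (-(1/2 : ℂ)) * ((σ j : ℝ) : ℂ) * ((σ j : ℝ) : ℂ)) from rfl]
    rw [exp_conj_diag hA]
    rw [conjCLM_apply, conj_mul_conj hsUU]
    have hfe : (fun j => ((σ j : ℝ) : ℂ) * Complex.exp (-(1/2 : ℂ) * ((σ j : ℝ) : ℂ) * ((σ j : ℝ) : ℂ)))
        = fun j => ((σ j : ℝ) : ℂ) * Complex.exp (-((σ j : ℝ) : ℂ)^2/2) := by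
      funext j
      rw [show -(1/2 : ℂ) * ((σ j : ℝ) : ℂ) * ((σ j : ℝ) : ℂ) = -((σ j : ℝ) : ℂ)^2/2 from by ring]
    rw [hfe]
  calc ∫ k : ℝ,
        (Complex.I / (Real.sqrt (2 * Real.pi) : ℂ) * k * Complex.exp (-(k : ℂ) ^ 2 / 2) *
          Complex.exp (-(Complex.I * k * p))) • NormedSpace.exp ((-(Complex.I * k * t)) • A)
      = ∫ k : ℝ, conjCLM U (g k) := by simp only [hrw]
    _ = conjCLM U (∫ k : ℝ, g k) := (conjCLM U).integral_comp_comm hg_int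
    _ = conjCLM U (fun j => ((σ j : ℝ) : ℂ) * Complex.exp (-((σ j : ℝ) : ℂ)^2/2)) := by
        rw [funext hint_coord]
    _ = _ := hRHS.symm
end

section
/- Let A be an N×N invertible Hermitian complex matrix and b ∈ ℂ^N. Then the solution x = A^{-1} b of the linear system A x = b satisfies x = ∫_0^∞ v(t, 0) dt, where v(t, p) = (p I + t A) exp(-(p I + t A)²/2) b; equivalently, the improper integral ∫_0^∞ t A exp(-(t²/2) A²) b dt converges and equals A^{-1} b. -/
open MeasureTheory Filter Matrix

namespace Stmt11

variable {N : ℕ}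

noncomputable def E (A : Matrix (Fin N) (Fin N) ℂ) (t : ℝ) : Matrix (Fin N) (Fin N) ℂ :=
  NormedSpace.exp ((-((t : ℂ) ^ 2 / 2)) • (A * A))

noncomputable def L (A : Matrix (Fin N) (Fin N) ℂ) (b : Fin N → ℂ) :
    Matrix (Fin N) (Fin N) ℂ →ₗ[ℂ] (Fin N → ℂ) where
  toFun X := (A⁻¹ * X) *ᵥ b
  map_add' X Y := by simp only [mul_add, add_mulVec]
  map_smul' c X := by simp only [mul_smul_comm, smul_mulVec, RingHom.id_apply]

lemma hasDerivAt_aux (A : Matrix (Fin N) (Fin N) ℂ) (hInv : IsUnit A.det)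
    (b : Fin N → ℂ) (t : ℝ) :
    HasDerivAt (fun s : ℝ => (A⁻¹ *ᵥ b) - (A⁻¹ * E A s) *ᵥ b)
      (((t : ℂ) • (A * E A t)) *ᵥ b) t := by
  letI : SeminormedRing (Matrix (Fin N) (Fin N) ℂ) := Matrix.linftyOpSemiNormedRing
  letI : NormedRing (Matrix (Fin N) (Fin N) ℂ) := Matrix.linftyOpNormedRing
  letI : NormedAlgebra ℂ (Matrix (Fin N) (Fin N) ℂ) := Matrix.linftyOpNormedAlgebra
  set B := A * A with hB
  -- derivative of scalar function
  have hf0 : HasDerivAt (fun s : ℝ => -(s ^ 2 / 2)) (-t) t := by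
    have h := ((hasDerivAt_pow 2 t).div_const 2).neg
    refine (show HasDerivAt (fun s : ℝ => -(s ^ 2 / 2)) _ t from h).congr_deriv ?_
    ring
  have hf : HasDerivAt (fun s : ℝ => ((-(s ^ 2 / 2) : ℝ) : ℂ)) ((-t : ℝ) : ℂ) t :=
    hf0.ofReal_comp
  have hg : HasDerivAt (fun z : ℂ => NormedSpace.exp (z • B))
      (NormedSpace.exp ((((-(t ^ 2 / 2) : ℝ)) : ℂ) • B) * B) (((-(t ^ 2 / 2) : ℝ) : ℂ)) :=
    hasDerivAt_exp_smul_const B _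
  have h1 : HasDerivAt (fun s : ℝ => NormedSpace.exp ((((-(s ^ 2 / 2) : ℝ)) : ℂ) • B))
      (((-t : ℝ) : ℂ) • (NormedSpace.exp ((((-(t ^ 2 / 2) : ℝ)) : ℂ) • B) * B)) t :=
    by have := HasDerivAt.scomp (x := t) (hg := hg) (hh := hf); exact this
  have hcast : ∀ s : ℝ, ((-(s ^ 2 / 2) : ℝ) : ℂ) = -((s : ℂ) ^ 2 / 2) := by
    intro s; push_cast; ring
  have h2 : HasDerivAt (fun s : ℝ => E A s) (((-t : ℝ) : ℂ) • (E A t * B)) t := by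
    simp only [E, ← hcast, ← hB]
    exact h1
  have h3 := ((LinearMap.toContinuousLinearMap (L A b)).restrictScalars ℝ
      |>.hasFDerivAt (x := E A t)).comp_hasDerivAt t h2
  have h4 := (hasDerivAt_const t (A⁻¹ *ᵥ b)).sub h3
  refine (show HasDerivAt (fun s : ℝ => (A⁻¹ *ᵥ b) - (A⁻¹ * E A s) *ᵥ b) _ t from h4).congr_deriv ?_
  symm
  show ((t : ℂ) • (A * E A t)) *ᵥ b
      = 0 - (L A b) (((-t : ℝ) : ℂ) • (E A t * B))
  rw [_root_.map_smul]
  show ((t : ℂ) • (A * E A t)) *ᵥ b = 0 - ((-t : ℝ) : ℂ) • ((A⁻¹ * (E A t * B)) *ᵥ b)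
  have hcomm : E A t * B = B * E A t := by
    have : Commute ((-((t : ℂ) ^ 2 / 2)) • B) B := (Commute.refl B).smul_left _
    exact this.exp_left
  rw [hcomm, hB, ← mul_assoc, ← mul_assoc, Matrix.nonsing_inv_mul A hInv, one_mul,
    smul_mulVec]
  push_cast
  rw [neg_smul, zero_sub, neg_neg]

end Stmt11

namespace Stmt11

lemma tendsto_E (A : Matrix (Fin N) (Fin N) ℂ) (hA : A.IsHermitian) (hInv : IsUnit A.det) :
    Tendsto (fun T : ℝ => E A T) atTop (nhds 0) := by
  letI : SeminormedRing (Matrix (Fin N) (Fin N) ℂ) := Matrix.linftyOpSemiNormedRing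
  letI : NormedRing (Matrix (Fin N) (Fin N) ℂ) := Matrix.linftyOpNormedRing
  letI : NormedAlgebra ℂ (Matrix (Fin N) (Fin N) ℂ) := Matrix.linftyOpNormedAlgebra
  set U : Matrix (Fin N) (Fin N) ℂ := (hA.eigenvectorUnitary : Matrix (Fin N) (Fin N) ℂ) with hUdef
  set d : Fin N → ℝ := hA.eigenvalues with hddef
  set D : Matrix (Fin N) (Fin N) ℂ := diagonal (RCLike.ofReal ∘ d) with hDdef
  have hU1 : U * star U = 1 := (Matrix.mem_unitaryGroup_iff).mp (Matrix.IsHermitian.eigenvectorUnitary hA).2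
  have hU2 : star U * U = 1 := (Matrix.mem_unitaryGroup_iff').mp (Matrix.IsHermitian.eigenvectorUnitary hA).2
  have hUinv : U⁻¹ = star U := Matrix.inv_eq_right_inv hU1
  have hUisunit : IsUnit U := ⟨⟨U, star U, hU1, hU2⟩, rfl⟩
  have hspec : A = U * D * star U := hA.spectral_theorem
  have hAA : A * A = U * (D * D) * star U := by
    conv_lhs => rw [hspec]
    simp only [mul_assoc]
    rw [← mul_assoc (star U) U, hU2, one_mul]
  have hdne : ∀ i, d i ≠ 0 := by
    intro i hdi
    have hdet := hA.det_eq_prod_eigenvalues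
    rw [hdet] at hInv
    have := hInv.ne_zero
    rw [Finset.prod_ne_zero_iff] at this
    exact this i (Finset.mem_univ i) (by rw [← hddef, hdi]; simp)
  have key : ∀ T : ℝ, E A T =
      U * diagonal (fun i => Complex.exp (((-(T ^ 2 / 2) * (d i) ^ 2 : ℝ)) : ℂ)) * U⁻¹ := by
    intro T
    have hc : (-((T : ℂ) ^ 2 / 2)) • (A * A)
        = U * ((-((T : ℂ) ^ 2 / 2)) • (D * D)) * U⁻¹ := by
      rw [hAA, hUinv, mul_smul_comm, smul_mul_assoc]
    have hfun : NormedSpace.exp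
        ((-((T : ℂ) ^ 2 / 2)) • fun i => (RCLike.ofReal ∘ d) i * (RCLike.ofReal ∘ d) i)
        = fun i => Complex.exp (((-(T ^ 2 / 2) * (d i) ^ 2 : ℝ)) : ℂ) := by
      funext i
      rw [Pi.coe_exp, ← Complex.exp_eq_exp_ℂ]
      congr 1
      simp only [Pi.smul_apply, Function.comp_apply, smul_eq_mul,
        RCLike.ofReal_alg, Complex.real_smul, mul_one]
      push_cast
      ring
    rw [E, hc, Matrix.exp_conj _ _ hUisunit, hDdef, diagonal_mul_diagonal,
      ← diagonal_smul, Matrix.exp_diagonal, hfun]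
  simp only [key]
  have hdiag : Tendsto
      (fun T : ℝ => diagonal (fun i => Complex.exp (((-(T ^ 2 / 2) * (d i) ^ 2 : ℝ)) : ℂ)))
      atTop (nhds (0 : Matrix (Fin N) (Fin N) ℂ)) := by
    refine tendsto_pi_nhds.mpr ?_
    intro i
    rw [tendsto_pi_nhds]
    intro j
    by_cases hij : i = j
    · subst hij
      simp only [diagonal_apply_eq, Pi.zero_apply, Matrix.zero_apply]
      rw [tendsto_zero_iff_norm_tendsto_zero]
      have hnorm : ∀ T : ℝ, ‖Complex.exp (((-(T ^ 2 / 2) * (d i) ^ 2 : ℝ)) : ℂ)‖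
          = Real.exp (-(T ^ 2 / 2) * (d i) ^ 2) := by
        intro T
        rw [Complex.norm_exp, Complex.ofReal_re]
      simp only [hnorm]
      have hsq : (0:ℝ) < (d i) ^ 2 :=
        lt_of_le_of_ne (sq_nonneg _) (Ne.symm (pow_ne_zero 2 (hdne i)))
      have hexp : Tendsto (fun T : ℝ => -(T ^ 2 / 2) * (d i) ^ 2) atTop atBot := by
        apply Tendsto.atBot_mul_const hsq
        apply tendsto_neg_atBot_iff.mpr
        exact (tendsto_pow_atTop two_ne_zero).atTop_div_const (by norm_num)
      exact Real.tendsto_exp_atBot.comp hexp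
    · simp only [diagonal_apply_ne _ hij, Matrix.zero_apply]
      exact tendsto_const_nhds
  have hcont : Continuous fun X : Matrix (Fin N) (Fin N) ℂ => U * X * U⁻¹ :=
    (continuous_const.matrix_mul continuous_id).matrix_mul continuous_const
  have := (hcont.tendsto 0).comp hdiag
  simpa [Function.comp_def] using this

end Stmt11

/-- For an `N×N` invertible Hermitian complex matrix `A` and `b ∈ ℂ^N`, the
solution `x = A⁻¹ b` of `A x = b` satisfies `x = ∫_0^∞ v(t,0) dt` where
`v(t,p) = (p I + t A) exp(-(p I + t A)²/2) b`; equivalently, the improper integral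
`∫_0^∞ t A exp(-(t²/2) A²) b dt` converges and equals `A⁻¹ b`. -/
theorem stmt_11 {N : ℕ} (A : Matrix (Fin N) (Fin N) ℂ) (hA : A.IsHermitian)
    (hInv : IsUnit A.det) (b : Fin N → ℂ)
    (M : ℝ → ℝ → Matrix (Fin N) (Fin N) ℂ)
    (hM : ∀ t p : ℝ, M t p = (p : ℂ) • (1 : Matrix (Fin N) (Fin N) ℂ) + (t : ℂ) • A)
    (v : ℝ → ℝ → Fin N → ℂ)
    (hv : ∀ t p : ℝ,
      v t p = (M t p * NormedSpace.exp ((-(1 / 2 : ℂ)) • (M t p * M t p))) *ᵥ b) :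
    Tendsto (fun T : ℝ => ∫ t in (0:ℝ)..T, v t 0) atTop (nhds (A⁻¹ *ᵥ b)) ∧
    Tendsto (fun T : ℝ => ∫ t in (0:ℝ)..T,
        ((t : ℂ) • (A * NormedSpace.exp ((-((t : ℂ) ^ 2 / 2)) • (A * A)))) *ᵥ b)
      atTop (nhds (A⁻¹ *ᵥ b)) := by
  have hv0 : ∀ t : ℝ, v t 0 =
      ((t : ℂ) • (A * NormedSpace.exp ((-((t : ℂ) ^ 2 / 2)) • (A * A)))) *ᵥ b := by
    intro t
    have h1 : ((-(1 / 2 : ℂ))) • (((t : ℂ) • A) * ((t : ℂ) • A))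
        = (-((t : ℂ) ^ 2 / 2)) • (A * A) := by
      rw [smul_mul_assoc, mul_smul_comm, smul_smul, smul_smul]
      congr 1
      ring
    rw [hv, hM]
    simp only [Complex.ofReal_zero, zero_smul, zero_add]
    rw [h1, smul_mul_assoc]
  have hcontE : Continuous fun t : ℝ => Stmt11.E A t := by
    letI : SeminormedRing (Matrix (Fin N) (Fin N) ℂ) := Matrix.linftyOpSemiNormedRing
    letI : NormedRing (Matrix (Fin N) (Fin N) ℂ) := Matrix.linftyOpNormedRing
    letI : NormedAlgebra ℂ (Matrix (Fin N) (Fin N) ℂ) := Matrix.linftyOpNormedAlgebra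
    have hscal : Continuous fun t : ℝ => -((t : ℂ) ^ 2 / 2) := by continuity
    exact (continuous_iff_continuousAt.2 fun z =>
      (hasDerivAt_exp_smul_const (𝕂 := ℂ) (A * A) z).continuousAt).comp hscal
  have hcontI : Continuous fun t : ℝ => ((t : ℂ) • (A * Stmt11.E A t)) *ᵥ b := by
    apply Continuous.matrix_mulVec _ continuous_const
    exact (Complex.continuous_ofReal).smul (continuous_const.matrix_mul hcontE)
  have key : ∀ T : ℝ, (∫ t in (0:ℝ)..T, ((t : ℂ) • (A * Stmt11.E A t)) *ᵥ b)
      = (A⁻¹ *ᵥ b) - (A⁻¹ * Stmt11.E A T) *ᵥ b := by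
    intro T
    rw [intervalIntegral.integral_eq_sub_of_hasDerivAt
      (fun x _ => Stmt11.hasDerivAt_aux A hInv b x) (hcontI.intervalIntegrable 0 T)]
    have hE0 : Stmt11.E A 0 = 1 := by
      letI : SeminormedRing (Matrix (Fin N) (Fin N) ℂ) := Matrix.linftyOpSemiNormedRing
      letI : NormedRing (Matrix (Fin N) (Fin N) ℂ) := Matrix.linftyOpNormedRing
      letI : NormedAlgebra ℂ (Matrix (Fin N) (Fin N) ℂ) := Matrix.linftyOpNormedAlgebra
      rw [Stmt11.E]
      norm_num
    rw [hE0, mul_one, sub_self, sub_zero]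
  have hcont2 : Continuous fun X : Matrix (Fin N) (Fin N) ℂ => (A⁻¹ * X) *ᵥ b :=
    (continuous_const.matrix_mul continuous_id).matrix_mulVec continuous_const
  have h5 : Tendsto (fun T : ℝ => (A⁻¹ * Stmt11.E A T) *ᵥ b) atTop
      (nhds ((A⁻¹ * 0) *ᵥ b)) := (hcont2.tendsto 0).comp (Stmt11.tendsto_E A hA hInv)
  have hmain : Tendsto (fun T : ℝ => ∫ t in (0:ℝ)..T, ((t : ℂ) • (A * Stmt11.E A t)) *ᵥ b)
      atTop (nhds (A⁻¹ *ᵥ b)) := by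
    simp only [key]
    have := Tendsto.sub (tendsto_const_nhds :
      Tendsto (fun _ : ℝ => A⁻¹ *ᵥ b) atTop (nhds (A⁻¹ *ᵥ b))) h5
    simpa using this
  have hmain' : Tendsto (fun T : ℝ => ∫ t in (0:ℝ)..T,
      ((t : ℂ) • (A * NormedSpace.exp ((-((t : ℂ) ^ 2 / 2)) • (A * A)))) *ᵥ b)
      atTop (nhds (A⁻¹ *ᵥ b)) := by
    simpa only [Stmt11.E] using hmain
  refine ⟨?_, hmain'⟩
  simp only [hv0]
  exact hmain'
end

section
/- Let A be an N×N invertible Hermitian complex matrix and b ∈ ℂ^N. Define v(t, p) = ∫_0^t (p I + s A) exp(-(p I + s A)²/2) b ds for t ≥ 0 and p ∈ ℝ. Then v solves the sourced convection system ∂_t v(t,p) = A ∂_p v(t,p) + p e^{-p²/2} b with v(0, p) = 0, and lim_{t → ∞} v(t, 0) = A^{-1} b, the solution of A x = b. -/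
open MeasureTheory Filter Matrix
open NormedSpace

variable {N : ℕ}

noncomputable def stmt12.Mm (A : Matrix (Fin N) (Fin N) ℂ) (s p : ℝ) :
    Matrix (Fin N) (Fin N) ℂ :=
  (p : ℂ) • (1 : Matrix (Fin N) (Fin N) ℂ) + (s : ℂ) • A

noncomputable def stmt12.Ee (A : Matrix (Fin N) (Fin N) ℂ) (s p : ℝ) :
    Matrix (Fin N) (Fin N) ℂ :=
  exp ((-(1 / 2 : ℂ)) • (stmt12.Mm A s p * stmt12.Mm A s p))

namespace stmt12

variable (A : Matrix (Fin N) (Fin N) ℂ)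

lemma comm_one (c : ℂ) (X : Matrix (Fin N) (Fin N) ℂ) :
    Commute (c • (1 : Matrix (Fin N) (Fin N) ℂ)) X :=
  (Commute.one_left X).smul_left c

lemma expand (s p : ℝ) :
    (-(1 / 2 : ℂ)) • (Mm A s p * Mm A s p) =
      (((-(p ^ 2 / 2) : ℝ) : ℂ) • (1 : Matrix (Fin N) (Fin N) ℂ)) +
        ((((-(p * s)) : ℝ) : ℂ) • A + (((-(s ^ 2 / 2)) : ℝ) : ℂ) • (A * A)) := by
  simp only [Mm, mul_add, add_mul, smul_mul_assoc, mul_smul_comm, smul_smul, mul_one, one_mul,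
    smul_add]
  push_cast
  module

lemma exp_one_smul (c : ℂ) :
    exp (c • (1 : Matrix (Fin N) (Fin N) ℂ)) = Complex.exp c • 1 := by
  letI : SeminormedRing (Matrix (Fin N) (Fin N) ℂ) := Matrix.linftyOpSemiNormedRing
  letI : NormedRing (Matrix (Fin N) (Fin N) ℂ) := Matrix.linftyOpNormedRing
  letI : NormedAlgebra ℂ (Matrix (Fin N) (Fin N) ℂ) := Matrix.linftyOpNormedAlgebra
  have h := NormedSpace.algebraMap_exp_comm (𝕂 := ℂ) (𝔸 := Matrix (Fin N) (Fin N) ℂ) c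
  rw [Algebra.algebraMap_eq_smul_one, Algebra.algebraMap_eq_smul_one] at h
  rw [Complex.exp_eq_exp_ℂ]
  exact h.symm

lemma fact (s p : ℝ) :
    Ee A s p = Complex.exp (((-(p ^ 2 / 2)) : ℝ) : ℂ) •
      (exp ((((-(p * s)) : ℝ) : ℂ) • A) * exp ((((-(s ^ 2 / 2)) : ℝ) : ℂ) • (A * A))) := by
  rw [Ee, expand, Matrix.exp_add_of_commute, Matrix.exp_add_of_commute, exp_one_smul,
    smul_mul_assoc, one_mul]
  · exact ((Commute.refl A).mul_right (Commute.refl A)).smul_left _ |>.smul_right _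
  · exact Commute.add_right (comm_one _ _) (comm_one _ _)

lemma Mm_zero (p : ℝ) : Mm A 0 p = (p : ℂ) • 1 := by simp [Mm]

lemma Ee_zero (p : ℝ) : Ee A 0 p = Complex.exp (((-(p ^ 2 / 2)) : ℝ) : ℂ) • 1 := by
  rw [fact]
  norm_num [exp_zero]

lemma Ee_t0 (t : ℝ) : Ee A t 0 = exp ((((-(t ^ 2 / 2)) : ℝ) : ℂ) • (A * A)) := by
  rw [fact]
  norm_num [exp_zero]

section Norm
attribute [local instance] Matrix.linftyOpSemiNormedRing Matrix.linftyOpNormedRing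
  Matrix.linftyOpNormedAlgebra

noncomputable def mulVecCLM (b : Fin N → ℂ) : Matrix (Fin N) (Fin N) ℂ →L[ℂ] (Fin N → ℂ) :=
  LinearMap.toContinuousLinearMap
    { toFun := fun X => X *ᵥ b
      map_add' := fun X Y => Matrix.add_mulVec X Y b
      map_smul' := fun c X => Matrix.smul_mulVec c X b }

@[simp] lemma mulVecCLM_apply (b : Fin N → ℂ) (X : Matrix (Fin N) (Fin N) ℂ) :
    mulVecCLM b X = X *ᵥ b := rfl

lemma commA_exp (c : ℂ) : Commute A (exp (c • A)) :=
  (((Commute.refl A).smul_right c).exp_right)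

lemma commA_exp2 (c : ℂ) : Commute A (exp (c • (A * A))) :=
  ((((Commute.refl A).mul_right (Commute.refl A)).smul_right c).exp_right)

lemma commA_Mm (s p : ℝ) : Commute A (Mm A s p) :=
  Commute.add_right ((Commute.one_right A).smul_right _) ((Commute.refl A).smul_right _)

lemma hasDerivAt_P (p s : ℝ) :
    HasDerivAt (fun s : ℝ => exp (((-(p * s) : ℝ) : ℂ) • A))
      (((-p : ℝ) : ℂ) • (exp (((-(p * s) : ℝ) : ℂ) • A) * A)) s := by
  have hu : HasDerivAt (fun s : ℝ => ((-(p * s) : ℝ) : ℂ)) ((-p : ℝ) : ℂ) s := by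
    simpa using (((hasDerivAt_id s).const_mul p).neg).ofReal_comp
  exact (hasDerivAt_exp_smul_const (𝕂 := ℂ) A (((-(p * s) : ℝ) : ℂ))).scomp s hu

lemma hasDerivAt_P' (t q : ℝ) :
    HasDerivAt (fun q : ℝ => exp (((-(q * t) : ℝ) : ℂ) • A))
      (((-t : ℝ) : ℂ) • (exp (((-(q * t) : ℝ) : ℂ) • A) * A)) q := by
  have hu : HasDerivAt (fun q : ℝ => ((-(q * t) : ℝ) : ℂ)) ((-t : ℝ) : ℂ) q := by
    simpa using (((hasDerivAt_id q).mul_const t).neg).ofReal_comp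
  exact (hasDerivAt_exp_smul_const (𝕂 := ℂ) A (((-(q * t) : ℝ) : ℂ))).scomp q hu

lemma hasDerivAt_sq (s : ℝ) :
    HasDerivAt (fun s : ℝ => ((-(s ^ 2 / 2) : ℝ) : ℂ)) ((-s : ℝ) : ℂ) s := by
  have : HasDerivAt (fun s : ℝ => -(s ^ 2 / 2)) (-s) s := by
    have := ((hasDerivAt_pow 2 s).div_const 2).neg
    simpa [Pi.neg_def] using this
  exact this.ofReal_comp

lemma hasDerivAt_Q (s : ℝ) :
    HasDerivAt (fun s : ℝ => exp (((-(s ^ 2 / 2) : ℝ) : ℂ) • (A * A)))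
      (((-s : ℝ) : ℂ) • (exp (((-(s ^ 2 / 2) : ℝ) : ℂ) • (A * A)) * (A * A))) s :=
  (hasDerivAt_exp_smul_const (𝕂 := ℂ) (A * A) _).scomp s (hasDerivAt_sq s)

lemma hasDerivAt_Ee_s (p s : ℝ) :
    HasDerivAt (fun s : ℝ => Ee A s p) (-(Mm A s p * A) * Ee A s p) s := by
  have key := (((hasDerivAt_P A p s).mul (hasDerivAt_Q A s)).const_smul
    (Complex.exp (((-(p ^ 2 / 2)) : ℝ) : ℂ)))
  have hfun : (fun s : ℝ => Ee A s p) = fun s : ℝ =>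
      Complex.exp (((-(p ^ 2 / 2)) : ℝ) : ℂ) •
        (exp ((((-(p * s)) : ℝ) : ℂ) • A) * exp ((((-(s ^ 2 / 2)) : ℝ) : ℂ) • (A * A))) :=
    funext fun s => fact A s p
  rw [hfun]
  refine key.congr_deriv (Eq.symm ?_)
  rw [fact, Mm]
  simp only [Complex.ofReal_neg, neg_smul, smul_neg, neg_mul, mul_neg, neg_neg, smul_mul_assoc,
    mul_smul_comm, mul_add, add_mul, one_mul, smul_add, smul_smul, mul_assoc]
  have hP : Commute A (exp (-((((p * s) : ℝ) : ℂ) • A))) :=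
    (((Commute.refl A).smul_right (((p * s) : ℝ) : ℂ)).neg_right).exp_right
  have hQ : Commute A (exp (-((((s ^ 2 / 2) : ℝ) : ℂ) • (A * A)))) :=
    ((((Commute.refl A).mul_right (Commute.refl A)).smul_right
      (((s ^ 2 / 2) : ℝ) : ℂ)).neg_right).exp_right
  have hPA2 : Commute (A * A) (exp (-((((p * s) : ℝ) : ℂ) • A))) := hP.mul_left hP
  have hQA2 : Commute (A * A) (exp (-((((s ^ 2 / 2) : ℝ) : ℂ) • (A * A)))) := hQ.mul_left hQ
  set P := exp (-((((p * s) : ℝ) : ℂ) • A)) with hPd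
  set Q := exp (-((((s ^ 2 / 2) : ℝ) : ℂ) • (A * A))) with hQd
  have g1 : P * (A * Q) = A * (P * Q) := by rw [← mul_assoc, ← hP.eq, mul_assoc]
  have g2 : P * (Q * (A * A)) = A * (A * (P * Q)) := by
    rw [← hQA2.eq, ← mul_assoc, ← hPA2.eq]; simp only [mul_assoc]
  rw [g1, g2, neg_add]

lemma hasDerivAt_Ee_p (s p : ℝ) :
    HasDerivAt (fun q : ℝ => Ee A s q) (-(Mm A s p) * Ee A s p) p := by
  have hc : HasDerivAt (fun q : ℝ => Complex.exp (((-(q ^ 2 / 2)) : ℝ) : ℂ))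
      (Complex.exp (((-(p ^ 2 / 2)) : ℝ) : ℂ) * ((-p : ℝ) : ℂ)) p :=
    (hasDerivAt_sq p).cexp
  have key := hc.smul ((hasDerivAt_P' A s p).mul_const
    (exp ((((-(s ^ 2 / 2)) : ℝ) : ℂ) • (A * A))))
  have hfun : (fun q : ℝ => Ee A s q) = fun q : ℝ =>
      Complex.exp (((-(q ^ 2 / 2)) : ℝ) : ℂ) •
        (exp ((((-(q * s)) : ℝ) : ℂ) • A) * exp ((((-(s ^ 2 / 2)) : ℝ) : ℂ) • (A * A))) :=
    funext fun q => fact A s q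
  rw [hfun]
  refine key.congr_deriv (Eq.symm ?_)
  rw [fact, Mm]
  simp only [Complex.ofReal_neg, neg_smul, smul_neg, neg_mul, mul_neg, neg_neg, smul_mul_assoc,
    mul_smul_comm, mul_add, add_mul, one_mul, smul_add, smul_smul, mul_assoc]
  have hP : Commute A (exp (-((((p * s) : ℝ) : ℂ) • A))) :=
    (((Commute.refl A).smul_right (((p * s) : ℝ) : ℂ)).neg_right).exp_right
  have g1 : exp (-((((p * s) : ℝ) : ℂ) • A)) *
      (A * exp (-((((s ^ 2 / 2) : ℝ) : ℂ) • (A * A)))) =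
      A * (exp (-((((p * s) : ℝ) : ℂ) • A)) *
        exp (-((((s ^ 2 / 2) : ℝ) : ℂ) • (A * A)))) := by
    rw [← mul_assoc, ← hP.eq, mul_assoc]
  rw [g1, neg_add, add_comm]

lemma inv_MmA (hInv : IsUnit A.det) (s p : ℝ) :
    A⁻¹ * (Mm A s p * A * Ee A s p) = Mm A s p * Ee A s p := by
  rw [← (commA_Mm A s p).eq, mul_assoc A (Mm A s p) (Ee A s p), ← mul_assoc,
    Matrix.nonsing_inv_mul A hInv, one_mul]

lemma hasDerivAt_time (hInv : IsUnit A.det) (b : Fin N → ℂ) (p t : ℝ) :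
    HasDerivAt (fun τ : ℝ => (A⁻¹ * (Ee A 0 p - Ee A τ p)) *ᵥ b)
      ((Mm A t p * Ee A t p) *ᵥ b) t := by
  have h1 : HasDerivAt (fun τ : ℝ => A⁻¹ * (Ee A 0 p - Ee A τ p))
      (A⁻¹ * (Mm A t p * A * Ee A t p)) t := by
    have h0 := ((hasDerivAt_const t (Ee A 0 p)).sub (hasDerivAt_Ee_s A p t)).const_mul A⁻¹
    refine h0.congr_deriv (Eq.symm ?_)
    rw [zero_sub, neg_mul, neg_neg]
  have h2 := (((mulVecCLM b).restrictScalars ℝ).hasFDerivAt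
    (x := A⁻¹ * (Ee A 0 p - Ee A t p))).comp_hasDerivAt t h1
  simp only [inv_MmA A hInv, Function.comp_def] at h2
  exact h2

lemma hasDerivAt_space (b : Fin N → ℂ) (t p : ℝ) :
    HasDerivAt (fun q : ℝ => (A⁻¹ * (Ee A 0 q - Ee A t q)) *ᵥ b)
      ((A⁻¹ * (Mm A t p * Ee A t p - Mm A 0 p * Ee A 0 p)) *ᵥ b) p := by
  have h1 := ((hasDerivAt_Ee_p A 0 p).sub (hasDerivAt_Ee_p A t p)).const_mul A⁻¹
  have h2 := (((mulVecCLM b).restrictScalars ℝ).hasFDerivAt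
    (x := A⁻¹ * (Ee A 0 p - Ee A t p))).comp_hasDerivAt p h1
  have e : A⁻¹ * (-(Mm A 0 p) * Ee A 0 p - -(Mm A t p) * Ee A t p) =
      A⁻¹ * (Mm A t p * Ee A t p - Mm A 0 p * Ee A 0 p) := by
    congr 1
    simp only [neg_mul, sub_neg_eq_add]
    abel
  rw [e] at h2
  simp only [Function.comp_def] at h2
  exact h2

lemma cont_integrand (b : Fin N → ℂ) (p : ℝ) :
    Continuous fun s : ℝ => (Mm A s p * Ee A s p) *ᵥ b := by
  have hE : Continuous fun s : ℝ => Ee A s p :=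
    continuous_iff_continuousAt.2 fun x => (hasDerivAt_Ee_s A p x).continuousAt
  have hM : Continuous fun s : ℝ => Mm A s p := by
    simp only [Mm]
    exact continuous_const.add (Complex.continuous_ofReal.smul continuous_const)
  exact (mulVecCLM b).continuous.comp (hM.mul hE)

lemma closed_form (hInv : IsUnit A.det) (b : Fin N → ℂ) (p t : ℝ) :
    (∫ s in (0:ℝ)..t, (Mm A s p * Ee A s p) *ᵥ b) = (A⁻¹ * (Ee A 0 p - Ee A t p)) *ᵥ b := by
  have h := intervalIntegral.integral_eq_sub_of_hasDerivAt
    (f := fun s => (A⁻¹ * (Ee A 0 p - Ee A s p)) *ᵥ b)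
    (f' := fun s => (Mm A s p * Ee A s p) *ᵥ b)
    (fun s _ => hasDerivAt_time A hInv b p s)
    ((cont_integrand A b p).intervalIntegrable 0 t)
  rw [h]
  simp

end Norm

section Limit

lemma eigen_sq_pos (hA : A.IsHermitian) (hInv : IsUnit A.det) (i : Fin N) :
    0 < hA.eigenvalues i * hA.eigenvalues i := by
  refine mul_self_pos.2 fun h => ?_
  refine hInv.ne_zero ?_
  rw [hA.det_eq_prod_eigenvalues]
  refine Finset.prod_eq_zero (Finset.mem_univ i) ?_
  rw [h]
  norm_num

lemma tendsto_Ee_zero (hA : A.IsHermitian) (hInv : IsUnit A.det) :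
    Tendsto (fun t : ℝ => Ee A t 0) atTop (nhds 0) := by
  classical
  set U : Matrix (Fin N) (Fin N) ℂ := (hA.eigenvectorUnitary : Matrix (Fin N) (Fin N) ℂ) with hU
  have hUU : star U * U = 1 := Matrix.UnitaryGroup.star_mul_self _
  have hUunit : IsUnit U := (Matrix.isUnit_iff_isUnit_det U).mpr
    (Matrix.UnitaryGroup.det_isUnit hA.eigenvectorUnitary)
  have hUinv : U⁻¹ = star U := Matrix.inv_eq_left_inv hUU
  set d : Fin N → ℂ := RCLike.ofReal ∘ hA.eigenvalues with hd
  have hspec : A = U * Matrix.diagonal d * U⁻¹ := by rw [hUinv]; exact hA.spectral_theorem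
  have cancel : ∀ X : Matrix (Fin N) (Fin N) ℂ, star U * (U * X) = X := fun X => by
    rw [← mul_assoc, hUU, one_mul]
  have hAA : ∀ t : ℝ, ((-(t ^ 2 / 2) : ℝ) : ℂ) • (A * A) =
      U * Matrix.diagonal (fun i => ((-(t ^ 2 / 2) : ℝ) : ℂ) * (d i * d i)) * U⁻¹ := by
    intro t
    have h1 : A * A = U * (Matrix.diagonal d * Matrix.diagonal d) * U⁻¹ := by
      rw [hspec, hUinv]
      simp only [mul_assoc]
      rw [cancel]
    rw [h1, Matrix.diagonal_mul_diagonal, ← smul_mul_assoc, ← mul_smul_comm,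
      ← Matrix.diagonal_smul]
    congr 2
  have hEe : ∀ t : ℝ, Ee A t 0 =
      U * Matrix.diagonal (fun i => Complex.exp (((-(t ^ 2 / 2) : ℝ) : ℂ) * (d i * d i))) * U⁻¹ := by
    intro t
    rw [Ee_t0, hAA, Matrix.exp_conj U _ hUunit, Matrix.exp_diagonal]
    congr 2
    funext i
    rw [Pi.exp_def, ← Complex.exp_eq_exp_ℂ]
  have hdiag : Tendsto (fun t : ℝ =>
      Matrix.diagonal (fun i => Complex.exp (((-(t ^ 2 / 2) : ℝ) : ℂ) * (d i * d i))))
      atTop (nhds (0 : Matrix (Fin N) (Fin N) ℂ)) := by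
    refine tendsto_pi_nhds.2 fun i => tendsto_pi_nhds.2 fun j => ?_
    rcases eq_or_ne i j with rfl | hij
    · simp only [Matrix.diagonal_apply_eq, Pi.zero_apply, Matrix.zero_apply]
      rw [tendsto_zero_iff_norm_tendsto_zero]
      have hcast : ∀ t : ℝ, ((-(t ^ 2 / 2) : ℝ) : ℂ) * (d i * d i) =
          ((-(t ^ 2 / 2) * (hA.eigenvalues i * hA.eigenvalues i) : ℝ) : ℂ) := by
        intro t
        have hco : ∀ r : ℝ, (RCLike.ofReal r : ℂ) = Complex.ofReal r := fun r => rfl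
        simp only [hd, Function.comp_apply, hco]
        push_cast
        ring
      simp only [hcast, Complex.norm_exp, Complex.ofReal_re]
      have hpos := eigen_sq_pos A hA hInv i
      have h2 : Tendsto (fun t : ℝ => t ^ 2 / 2) atTop atTop :=
        (tendsto_pow_atTop two_ne_zero).atTop_div_const (by norm_num)
      have h1 : Tendsto (fun t : ℝ => -(t ^ 2 / 2) * (hA.eigenvalues i * hA.eigenvalues i))
          atTop atBot :=
        Tendsto.atBot_mul_const hpos (tendsto_neg_atTop_atBot.comp h2)
      exact Real.tendsto_exp_atBot.comp h1
    · simp [Matrix.diagonal_apply_ne _ hij]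
  have hcont : Continuous fun X : Matrix (Fin N) (Fin N) ℂ => U * X * U⁻¹ :=
    (continuous_const.matrix_mul continuous_id).matrix_mul continuous_const
  have hfin := (hcont.tendsto 0).comp hdiag
  simp only [Function.comp_def, mul_zero, Matrix.zero_mul, Matrix.mul_zero] at hfin
  exact Tendsto.congr (fun t => (hEe t).symm) hfin

end Limit

end stmt12


/-- Let `A` be an `N×N` invertible Hermitian complex matrix, `b ∈ ℂ^N`, and
`v(t,p) = ∫_0^t (p I + s A) exp(-(p I + s A)²/2) b ds` for `t ≥ 0`, `p ∈ ℝ`. Then `v` solves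
the sourced convection system `∂ₜ v = A ∂ₚ v + p e^{-p²/2} b` with `v(0,p) = 0`, and
`v(t,0) → A⁻¹ b` (the solution of `A x = b`) as `t → ∞`. -/
theorem stmt_12 {N : ℕ} (A : Matrix (Fin N) (Fin N) ℂ) (hA : A.IsHermitian)
    (hInv : IsUnit A.det) (b : Fin N → ℂ)
    (M : ℝ → ℝ → Matrix (Fin N) (Fin N) ℂ)
    (hM : ∀ s p : ℝ, M s p = (p : ℂ) • (1 : Matrix (Fin N) (Fin N) ℂ) + (s : ℂ) • A)
    (v : ℝ → ℝ → Fin N → ℂ)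
    (hv : ∀ t : ℝ, 0 ≤ t → ∀ p : ℝ,
      v t p = ∫ s in (0:ℝ)..t,
        (M s p * NormedSpace.exp ((-(1 / 2 : ℂ)) • (M s p * M s p))) *ᵥ b) :
    (∀ p : ℝ, v 0 p = 0) ∧
    (∀ t ∈ Set.Ici (0:ℝ), ∀ p : ℝ,
      HasDerivWithinAt (fun τ => v τ p)
        (A *ᵥ deriv (fun q => v t q) p + ((p * Real.exp (-p ^ 2 / 2) : ℝ) : ℂ) • b)
        (Set.Ici 0) t) ∧
    Tendsto (fun t : ℝ => v t 0) atTop (nhds (A⁻¹ *ᵥ b)) := by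
  classical
  have hvc : ∀ t : ℝ, 0 ≤ t → ∀ p : ℝ,
      v t p = (A⁻¹ * (stmt12.Ee A 0 p - stmt12.Ee A t p)) *ᵥ b := by
    intro t ht p
    rw [hv t ht p]
    have hcongr : ∀ s : ℝ,
        (M s p * NormedSpace.exp ((-(1 / 2 : ℂ)) • (M s p * M s p))) *ᵥ b
          = (stmt12.Mm A s p * stmt12.Ee A s p) *ᵥ b := by
      intro s
      rw [hM s p]
      rfl
    rw [intervalIntegral.integral_congr (g := fun s => (stmt12.Mm A s p * stmt12.Ee A s p) *ᵥ b)
      (fun s _ => hcongr s)]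
    exact stmt12.closed_form A hInv b p t
  refine ⟨?_, ?_, ?_⟩
  · intro p
    rw [hv 0 le_rfl p, intervalIntegral.integral_same]
  · intro t ht p
    have hfun : (fun q => v t q) = fun q => (A⁻¹ * (stmt12.Ee A 0 q - stmt12.Ee A t q)) *ᵥ b :=
      funext fun q => hvc t ht q
    have hderiv : deriv (fun q => v t q) p
        = (A⁻¹ * (stmt12.Mm A t p * stmt12.Ee A t p
            - stmt12.Mm A 0 p * stmt12.Ee A 0 p)) *ᵥ b := by
      rw [hfun]
      exact (stmt12.hasDerivAt_space A b t p).deriv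
    have h00 : (stmt12.Mm A 0 p * stmt12.Ee A 0 p) *ᵥ b
        = ((p * Real.exp (-p ^ 2 / 2) : ℝ) : ℂ) • b := by
      rw [stmt12.Mm_zero, stmt12.Ee_zero, smul_mul_assoc, one_mul, Matrix.smul_mulVec,
        Matrix.smul_mulVec, Matrix.one_mulVec, smul_smul]
      congr 1
      push_cast [Complex.ofReal_exp]
      ring_nf
    have hval : A *ᵥ deriv (fun q => v t q) p + ((p * Real.exp (-p ^ 2 / 2) : ℝ) : ℂ) • b
        = (stmt12.Mm A t p * stmt12.Ee A t p) *ᵥ b := by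
      rw [hderiv, Matrix.mulVec_mulVec, ← mul_assoc, Matrix.mul_nonsing_inv A hInv, one_mul,
        Matrix.sub_mulVec, h00]
      abel
    rw [hval]
    exact ((stmt12.hasDerivAt_time A hInv b p t).hasDerivWithinAt).congr
      (fun y hy => hvc y hy p) (hvc t ht p)
  · have heq : ∀ᶠ t in atTop, ((A⁻¹ * (1 - stmt12.Ee A t 0)) *ᵥ b) = v t 0 := by
      filter_upwards [eventually_ge_atTop (0:ℝ)] with t ht
      rw [hvc t ht 0, stmt12.Ee_zero]
      norm_num
    have hcont : Continuous fun X : Matrix (Fin N) (Fin N) ℂ => (A⁻¹ * (1 - X)) *ᵥ b :=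
      (continuous_const.matrix_mul
        (continuous_const.sub continuous_id)).matrix_mulVec continuous_const
    have h0 := (hcont.tendsto 0).comp (stmt12.tendsto_Ee_zero A hA hInv)
    simp only [Function.comp_def, sub_zero, mul_one] at h0
    exact Tendsto.congr' heq h0
end

section
/- Let A be an N×N invertible Hermitian complex matrix and T ≥ 0. Then the truncation error of the time integral satisfies ‖A^{-1} - ∫_0^T t A exp(-(t²/2) A²) dt‖ ≤ ‖A^{-1}‖ · exp(-T² / (2 ‖A^{-1}‖²)), where ‖·‖ is the spectral (operator 2-) norm. -/
open MeasureTheory Matrix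
open scoped Matrix.Norms.L2Operator

section Aux
variable {n : Type*} [Fintype n] [DecidableEq n]

lemma aux_norm_le_norm_diagonal (d : n → ℂ) (i : n) : ‖d i‖ ≤ ‖Matrix.diagonal d‖ := by
  have h := Matrix.l2_opNorm_mulVec (Matrix.diagonal d) (EuclideanSpace.single i 1)
  have h3 : Matrix.diagonal d *ᵥ (EuclideanSpace.single i (1:ℂ)) = Pi.single i (d i * 1) :=
    Matrix.diagonal_mulVec_single d i 1
  rw [h3] at h
  simpa [show ((EuclideanSpace.equiv n ℂ).symm (Pi.single i (d i * 1)) : EuclideanSpace ℂ n)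
      = EuclideanSpace.single i (d i * 1) from rfl, EuclideanSpace.norm_single] using h

lemma aux_norm_diagonal_le (d : n → ℂ) (M : ℝ) (hM : 0 ≤ M) (h : ∀ i, ‖d i‖ ≤ M) :
    ‖Matrix.diagonal d‖ ≤ M := by
  rw [Matrix.l2_opNorm_def]
  refine ContinuousLinearMap.opNorm_le_bound _ hM fun x => ?_
  show ‖(WithLp.equiv 2 (n → ℂ)).symm (Matrix.diagonal d *ᵥ (WithLp.equiv 2 (n → ℂ)) x)‖
      ≤ M * ‖x‖
  rw [EuclideanSpace.norm_eq]
  have hxn : ‖x‖ = Real.sqrt (∑ j, ‖x j‖ ^ 2) := EuclideanSpace.norm_eq x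
  rw [hxn, ← Real.sqrt_sq hM, ← Real.sqrt_mul (sq_nonneg M)]
  apply Real.sqrt_le_sqrt
  rw [Finset.mul_sum]
  apply Finset.sum_le_sum
  intro j _
  have : ((WithLp.equiv 2 (n → ℂ)).symm (Matrix.diagonal d *ᵥ (WithLp.equiv 2 (n → ℂ)) x)) j
      = d j * x j := by
    simp [Matrix.mulVec_diagonal]
  rw [this, norm_mul, mul_pow]
  exact mul_le_mul_of_nonneg_right (pow_le_pow_left₀ (norm_nonneg _) (h j) 2) (sq_nonneg _)

-- conjugation by a unitary preserves the norm
lemma aux_norm_unitary_conj (U X : Matrix n n ℂ) (hU : U ∈ unitary (Matrix n n ℂ)) :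
    ‖U * X * star U‖ = ‖X‖ := by
  rw [CStarRing.norm_mul_mem_unitary _ (Unitary.star_mem hU),
    CStarRing.norm_mem_unitary_mul _ hU]

end Aux

set_option maxHeartbeats 1600000 in
/-- For an `N×N` invertible Hermitian complex matrix `A` and `T ≥ 0`, the
truncation error of the time integral satisfies
`‖A⁻¹ - ∫_0^T t A exp(-(t²/2) A²) dt‖ ≤ ‖A⁻¹‖ exp(-T²/(2‖A⁻¹‖²))` in the spectral norm. -/
theorem stmt_13 {N : ℕ} (A : Matrix (Fin N) (Fin N) ℂ) (hA : A.IsHermitian)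
    (hInv : IsUnit A.det) (T : ℝ) (hT : 0 ≤ T) :
    ‖A⁻¹ - ∫ t in (0:ℝ)..T, (t : ℂ) • (A * NormedSpace.exp ((-((t : ℂ) ^ 2 / 2)) • (A * A)))‖
      ≤ ‖A⁻¹‖ * Real.exp (-T ^ 2 / (2 * ‖A⁻¹‖ ^ 2)) := by
  rcases isEmpty_or_nonempty (Fin N) with hE | hNE
  · have h1 : A⁻¹ = 0 := by ext i j; exact hE.elim i
    have h2 : (A⁻¹ - ∫ t in (0:ℝ)..T,
        (t : ℂ) • (A * NormedSpace.exp ((-((t : ℂ) ^ 2 / 2)) • (A * A)))) = 0 := by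
      ext i j; exact hE.elim i
    rw [h2, h1, norm_zero]; simp
  -- notation
  set U : Matrix (Fin N) (Fin N) ℂ := (hA.eigenvectorUnitary : Matrix (Fin N) (Fin N) ℂ) with hUdef
  have hU : U ∈ unitary (Matrix (Fin N) (Fin N) ℂ) := (hA.eigenvectorUnitary).2
  have hUU : star U * U = 1 := Unitary.star_mul_self_of_mem hU
  have hUU' : U * star U = 1 := Unitary.mul_star_self_of_mem hU
  set lam : Fin N → ℝ := hA.eigenvalues with hlam
  have hlam_ne : ∀ i, lam i ≠ 0 := by
    intro i hi
    have hdet := hA.det_eq_prod_eigenvalues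
    rw [Finset.prod_eq_zero (Finset.mem_univ i) (Complex.ofReal_eq_zero.mpr hi)]
        at hdet
    exact hInv.ne_zero (by rw [hdet])
  -- A⁻¹ as a conjugated diagonal
  have hAinv : A⁻¹ = U * Matrix.diagonal (fun i => ((lam i : ℂ))⁻¹) * star U := by
    apply Matrix.inv_eq_left_inv
    conv_lhs => rw [show A = U * Matrix.diagonal ((↑) ∘ lam) * star U from hA.spectral_theorem]
    calc (U * Matrix.diagonal (fun i => ((lam i : ℂ))⁻¹) * star U) *
        (U * Matrix.diagonal ((↑) ∘ lam) * star U)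
        = U * (Matrix.diagonal (fun i => ((lam i : ℂ))⁻¹) * (star U * U) *
            Matrix.diagonal ((↑) ∘ lam)) * star U := by noncomm_ring
      _ = 1 := by
          rw [hUU, mul_one, Matrix.diagonal_mul_diagonal]
          have : (fun i => ((lam i : ℂ))⁻¹ * ((↑) ∘ lam) i) = fun _ => (1:ℂ) := by
            funext i
            exact inv_mul_cancel₀ (by exact_mod_cast hlam_ne i)
          rw [this, Matrix.diagonal_one, mul_one, hUU']
  set B := A * A with hB
  -- derivative of the antiderivative
  have hderiv : ∀ t : ℝ, HasDerivAt
      (fun s : ℝ => -(A⁻¹ * NormedSpace.exp ((-((s:ℂ) ^ 2 / 2)) • B)))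
      ((t : ℂ) • (A * NormedSpace.exp ((-((t:ℂ) ^ 2 / 2)) • B))) t := by
    intro t
    have hre : HasDerivAt (fun s : ℝ => -(s ^ 2 / 2)) (-t) t := by
      have := ((hasDerivAt_pow 2 t).div_const 2).neg
      refine this.congr_deriv ?_
      push_cast
      ring
    have hc' : HasDerivAt (fun s : ℝ => -((s:ℂ) ^ 2 / 2)) (-(t : ℂ)) t := by
      have h2' := hre.ofReal_comp
      convert h2' using 2 <;> push_cast <;> ring_nf
    have h1 : HasDerivAt (fun z : ℂ => NormedSpace.exp (z • B))
        (B * NormedSpace.exp ((-((t:ℂ) ^ 2 / 2)) • B)) (-((t:ℂ) ^ 2 / 2)) :=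
      hasDerivAt_exp_smul_const' B _
    have h2 := h1.scomp t hc'
    have h3 := (h2.const_mul (A⁻¹)).neg
    refine h3.congr_deriv ?_
    have key : A⁻¹ * (B * NormedSpace.exp ((-((t:ℂ) ^ 2 / 2)) • B))
        = A * NormedSpace.exp ((-((t:ℂ) ^ 2 / 2)) • B) := by
      rw [hB, mul_assoc A A, ← mul_assoc A⁻¹, Matrix.nonsing_inv_mul A hInv, one_mul]
    rw [mul_smul_comm, key, ← neg_smul, neg_neg]
  -- continuity of the integrand
  have hcont : Continuous
      (fun t : ℝ => (t : ℂ) • (A * NormedSpace.exp ((-((t:ℂ) ^ 2 / 2)) • B))) := by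
    apply Continuous.smul Complex.continuous_ofReal
    exact continuous_const.mul ((continuous_iff_continuousAt.2 fun x => (NormedSpace.exp_analytic (𝕂 := ℂ) x).continuousAt).comp (by fun_prop))
  -- FTC
  have hI : (∫ t in (0:ℝ)..T, (t : ℂ) • (A * NormedSpace.exp ((-((t:ℂ) ^ 2 / 2)) • B)))
      = -(A⁻¹ * NormedSpace.exp ((-((T:ℂ) ^ 2 / 2)) • B))
        - -(A⁻¹ * NormedSpace.exp ((-(((0:ℝ):ℂ) ^ 2 / 2)) • B)) :=
    intervalIntegral.integral_eq_sub_of_hasDerivAt (fun t _ => hderiv t)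
      (hcont.intervalIntegrable 0 T)
  have hkey : A⁻¹ - (∫ t in (0:ℝ)..T,
        (t : ℂ) • (A * NormedSpace.exp ((-((t:ℂ) ^ 2 / 2)) • B)))
      = A⁻¹ * NormedSpace.exp ((-((T:ℂ) ^ 2 / 2)) • B) := by
    rw [hI]
    have : (-(((0:ℝ):ℂ) ^ 2 / 2)) • B = (0 : ℂ) • B := by norm_num
    rw [this, zero_smul, NormedSpace.exp_zero, mul_one]
    abel
  -- diagonalization of the remainder
  have hB2 : B = U * Matrix.diagonal (fun i => ((lam i : ℂ)) ^ 2) * star U := by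
    rw [hB]
    conv_lhs => rw [show A = U * Matrix.diagonal ((↑) ∘ lam) * star U from hA.spectral_theorem]
    have h4 : (U * Matrix.diagonal ((↑) ∘ lam) * star U) *
        (U * Matrix.diagonal ((↑) ∘ lam) * star U)
        = U * (Matrix.diagonal ((↑) ∘ lam) * (star U * U) * Matrix.diagonal ((↑) ∘ lam))
          * star U := by noncomm_ring
    rw [h4, hUU, mul_one, Matrix.diagonal_mul_diagonal]
    congr 1
    funext i
    simp [sq]
  have hUinv : U⁻¹ = star U := Matrix.inv_eq_right_inv hUU'
  have hUunit : IsUnit U := ⟨⟨U, star U, hUU', hUU⟩, rfl⟩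
  have hExpd : NormedSpace.exp ((-((T:ℂ) ^ 2 / 2)) • B)
      = U * Matrix.diagonal
          (fun i => NormedSpace.exp ((-((T:ℂ) ^ 2 / 2)) * (lam i : ℂ) ^ 2)) * star U := by
    have hsm : (-((T:ℂ) ^ 2 / 2)) • B
        = U * ((-((T:ℂ) ^ 2 / 2)) • Matrix.diagonal (fun i => ((lam i : ℂ)) ^ 2)) * U⁻¹ := by
      rw [hUinv, hB2, mul_smul_comm, smul_mul_assoc]
    rw [hsm, Matrix.exp_conj U _ hUunit, hUinv, ← Matrix.diagonal_smul,
      Matrix.exp_diagonal, Pi.exp_def]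
    congr 2
  have hfinal : A⁻¹ * NormedSpace.exp ((-((T:ℂ) ^ 2 / 2)) • B)
      = U * Matrix.diagonal (fun i => ((lam i : ℂ))⁻¹
          * NormedSpace.exp ((-((T:ℂ) ^ 2 / 2)) * (lam i : ℂ) ^ 2)) * star U := by
    rw [hAinv, hExpd]
    have h5 : (U * Matrix.diagonal (fun i => ((lam i : ℂ))⁻¹) * star U) *
        (U * Matrix.diagonal
          (fun i => NormedSpace.exp ((-((T:ℂ) ^ 2 / 2)) * (lam i : ℂ) ^ 2)) * star U)
        = U * (Matrix.diagonal (fun i => ((lam i : ℂ))⁻¹) * (star U * U) *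
            Matrix.diagonal
              (fun i => NormedSpace.exp ((-((T:ℂ) ^ 2 / 2)) * (lam i : ℂ) ^ 2))) * star U := by
      noncomm_ring
    rw [h5, hUU, mul_one, Matrix.diagonal_mul_diagonal]
  -- norms
  have hnormAinv : ‖A⁻¹‖ = ‖Matrix.diagonal (fun i => ((lam i : ℂ))⁻¹)‖ := by
    conv_lhs => rw [hAinv]
    exact aux_norm_unitary_conj _ _ hU
  have hMi : ∀ i, ‖((lam i : ℂ))⁻¹‖ ≤ ‖A⁻¹‖ := by
    intro i
    rw [hnormAinv]
    exact aux_norm_le_norm_diagonal (fun j => ((lam j : ℂ))⁻¹) i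
  have hMpos : 0 < ‖A⁻¹‖ := by
    obtain ⟨i⟩ := hNE
    refine lt_of_lt_of_le ?_ (hMi i)
    rw [norm_pos_iff]
    exact inv_ne_zero (Complex.ofReal_ne_zero.mpr (hlam_ne i))
  rw [hkey, hfinal, aux_norm_unitary_conj _ _ hU]
  apply aux_norm_diagonal_le _ _ (by positivity)
  intro i
  rw [norm_mul]
  have habs : ‖((lam i : ℂ))⁻¹‖ = |lam i|⁻¹ := by
    rw [norm_inv, Complex.norm_real, Real.norm_eq_abs]
  have hexp : ‖NormedSpace.exp ((-((T:ℂ) ^ 2 / 2)) * (lam i : ℂ) ^ 2)‖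
      = Real.exp (-(T ^ 2 / 2) * (lam i) ^ 2) := by
    rw [← Complex.exp_eq_exp_ℂ]
    have hcast : (-((T:ℂ) ^ 2 / 2)) * ((lam i : ℂ)) ^ 2
        = (((-(T ^ 2 / 2) * (lam i) ^ 2 : ℝ)) : ℂ) := by push_cast; ring
    rw [hcast, ← Complex.ofReal_exp, Complex.norm_real, Real.norm_eq_abs,
      abs_of_pos (Real.exp_pos _)]
  rw [hexp]
  have hinv_le : (‖A⁻¹‖)⁻¹ ≤ |lam i| := by
    rw [← inv_le_comm₀ (abs_pos.mpr (hlam_ne i)) hMpos, ← habs]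
    exact hMi i
  have hsq : (‖A⁻¹‖ ^ 2)⁻¹ ≤ (lam i) ^ 2 := by
    rw [← inv_pow, ← sq_abs (lam i)]
    exact pow_le_pow_left₀ (by positivity) hinv_le 2
  have hexp_le : Real.exp (-(T ^ 2 / 2) * (lam i) ^ 2)
      ≤ Real.exp (-T ^ 2 / (2 * ‖A⁻¹‖ ^ 2)) := by
    apply Real.exp_le_exp.mpr
    have h6 : -T ^ 2 / (2 * ‖A⁻¹‖ ^ 2) = -(T ^ 2 / 2) * (‖A⁻¹‖ ^ 2)⁻¹ := by
      field_simp
    rw [h6]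
    have h7 : (0:ℝ) ≤ T ^ 2 / 2 := by positivity
    nlinarith [mul_le_mul_of_nonneg_left hsq h7]
  calc ‖((lam i : ℂ))⁻¹‖ * Real.exp (-(T ^ 2 / 2) * (lam i) ^ 2)
      ≤ ‖A⁻¹‖ * Real.exp (-T ^ 2 / (2 * ‖A⁻¹‖ ^ 2)) :=
    mul_le_mul (hMi i) hexp_le (Real.exp_pos _).le hMpos.le
end

section
/- Let A be an N×N Hermitian complex matrix, let [a,b] ⊂ ℝ, let Q ≥ 1, and let x_0, …, x_{Q-1} ∈ [a,b] and w_0, …, w_{Q-1} ∈ ℝ be quadrature nodes and weights. Let f : ℝ × [a,b] → ℂ be such that f(λ, ·) ∈ C^{2Q}[a,b] for every eigenvalue λ of A, and suppose the quadrature rule satisfies the Gaussian error formula: for every eigenvalue λ of A there exists ξ ∈ (a,b) with ∫_a^b f(λ, x) dx − Σ_{q=0}^{Q−1} w_q f(λ, x_q) = ((b−a)^{2Q+1} (Q!)^4 / ((2Q+1) ((2Q)!)^3)) · f^{(2Q)}(λ, ξ), where f^{(2Q)} denotes the 2Q-th partial derivative in the second variable. Then, defining f(A, x) by the functional calculus applied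 to the Hermitian matrix A, one has ‖∫_a^b f(A, x) dx − Σ_{q=0}^{Q−1} w_q f(A, x_q)‖ ≤ ((b−a)^{2Q+1} (Q!)^4 / ((2Q+1) ((2Q)!)^3)) · max_{x ∈ [a,b]} ‖f^{(2Q)}(A, x)‖, in the spectral norm. -/
open MeasureTheory Matrix
open scoped Matrix.Norms.L2Operator

lemma norm_conj_unitary {n : Type*} [Fintype n] [DecidableEq n]
    (U : Matrix.unitaryGroup n ℂ) (M : Matrix n n ℂ) :
    ‖(U : Matrix n n ℂ) * M * star (U : Matrix n n ℂ)‖ = ‖M‖ := by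
  rw [CStarRing.norm_mul_mem_unitary _ (Unitary.star_mem U.2),
    CStarRing.norm_mem_unitary_mul M U.2]

lemma l2_opNorm_diagonal_le {n : Type*} [Fintype n] [DecidableEq n]
    (d : n → ℂ) (c : ℝ) (hc : 0 ≤ c) (h : ∀ i, ‖d i‖ ≤ c) :
    ‖Matrix.diagonal d‖ ≤ c := by
  rw [Matrix.l2_opNorm_def]
  refine ContinuousLinearMap.opNorm_le_bound _ hc fun x => ?_
  simp only [LinearEquiv.trans_apply, Matrix.toEuclideanLin_apply,
    LinearMap.coe_toContinuousLinearMap']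
  rw [EuclideanSpace.norm_eq, EuclideanSpace.norm_eq]
  have h1 : ∀ i, ‖((WithLp.equiv 2 (n → ℂ)).symm
      (Matrix.diagonal d *ᵥ (WithLp.equiv 2 (n → ℂ)) x)) i‖ ^ 2 ≤ c ^ 2 * ‖x i‖ ^ 2 := by
    intro i
    have e1 : ((WithLp.equiv 2 (n → ℂ)).symm
        (Matrix.diagonal d *ᵥ (WithLp.equiv 2 (n → ℂ)) x)) i = d i * x i := by
      simp [Matrix.mulVec_diagonal]
    rw [e1, norm_mul, mul_pow]
    gcongr
    exact h i
  calc Real.sqrt (∑ i, ‖((WithLp.equiv 2 (n → ℂ)).symm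
        (Matrix.diagonal d *ᵥ (WithLp.equiv 2 (n → ℂ)) x)) i‖ ^ 2)
      ≤ Real.sqrt (∑ i, c ^ 2 * ‖x i‖ ^ 2) :=
        Real.sqrt_le_sqrt (Finset.sum_le_sum fun i _ => h1 i)
    _ = c * Real.sqrt (∑ i, ‖x i‖ ^ 2) := by
        rw [← Finset.mul_sum, Real.sqrt_mul (sq_nonneg c), Real.sqrt_sq hc]

lemma le_l2_opNorm_diagonal {n : Type*} [Fintype n] [DecidableEq n]
    (d : n → ℂ) (i : n) : ‖d i‖ ≤ ‖Matrix.diagonal d‖ := by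
  have h := Matrix.l2_opNorm_mulVec (Matrix.diagonal d) (EuclideanSpace.single i 1)
  have h2 : (EuclideanSpace.equiv n ℂ).symm (Matrix.diagonal d *ᵥ (EuclideanSpace.single i 1))
      = EuclideanSpace.single i (d i) := by
    ext j
    simp [EuclideanSpace.single_apply, Matrix.mulVec_diagonal]
  rw [h2, EuclideanSpace.norm_single, EuclideanSpace.norm_single] at h
  simpa using h

noncomputable def hermitianFunCalc {N : ℕ} {A : Matrix (Fin N) (Fin N) ℂ}
    (hA : A.IsHermitian) (g : ℝ → ℂ) : Matrix (Fin N) (Fin N) ℂ :=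
  (hA.eigenvectorUnitary : Matrix (Fin N) (Fin N) ℂ) *
    Matrix.diagonal (fun i => g (hA.eigenvalues i)) *
    star (hA.eigenvectorUnitary : Matrix (Fin N) (Fin N) ℂ)

set_option maxHeartbeats 1000000 in
/-- the Gaussian-quadrature error bound for matrix functions of a Hermitian
matrix `A`, in the spectral norm: if for each eigenvalue `λ` of `A` the quadrature rule
satisfies the Gaussian error formula with constant
`C = (b-a)^{2Q+1} (Q!)⁴ / ((2Q+1) ((2Q)!)³)`, then
`‖∫_a^b f(A,x) dx − Σ_q w_q f(A,x_q)‖ ≤ C · max_{x ∈ [a,b]} ‖f^{(2Q)}(A,x)‖`. -/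
theorem stmt_14 {N : ℕ} (A : Matrix (Fin N) (Fin N) ℂ) (hA : A.IsHermitian)
    (a b : ℝ) (hab : a ≤ b) (Q : ℕ) (hQ : 1 ≤ Q)
    (x : Fin Q → ℝ) (w : Fin Q → ℝ) (hx : ∀ q, x q ∈ Set.Icc a b)
    (f : ℝ → ℝ → ℂ)
    (hf : ∀ i : Fin N, ContDiffOn ℝ ((2 * Q : ℕ) : ℕ∞) (f (hA.eigenvalues i)) (Set.Icc a b))
    (herr : ∀ i : Fin N, ∃ ξ ∈ Set.Ioo a b,
      (∫ s in a..b, f (hA.eigenvalues i) s) - ∑ q, (w q : ℂ) * f (hA.eigenvalues i) (x q)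
        = (((b - a) ^ (2 * Q + 1) * (Q.factorial : ℝ) ^ 4 /
            ((2 * Q + 1) * ((2 * Q).factorial : ℝ) ^ 3) : ℝ) : ℂ) *
          iteratedDerivWithin (2 * Q) (f (hA.eigenvalues i)) (Set.Icc a b) ξ) :
    ‖(∫ s in a..b, hermitianFunCalc hA (fun lam => f lam s)) -
        ∑ q, w q • hermitianFunCalc hA (fun lam => f lam (x q))‖
      ≤ ((b - a) ^ (2 * Q + 1) * (Q.factorial : ℝ) ^ 4 /
          ((2 * Q + 1) * ((2 * Q).factorial : ℝ) ^ 3)) *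
        ⨆ s : Set.Icc a b,
          ‖hermitianFunCalc hA
            (fun lam => iteratedDerivWithin (2 * Q) (f lam) (Set.Icc a b) (s : ℝ))‖ := by
  classical
  set C : ℝ := (b - a) ^ (2 * Q + 1) * (Q.factorial : ℝ) ^ 4 /
      ((2 * Q + 1) * ((2 * Q).factorial : ℝ) ^ 3) with hC_def
  have hba : (0:ℝ) ≤ b - a := by linarith
  have hC : 0 ≤ C := by positivity
  set S : ℝ := ⨆ s : Set.Icc a b,
      ‖hermitianFunCalc hA
        (fun lam => iteratedDerivWithin (2 * Q) (f lam) (Set.Icc a b) (s : ℝ))‖ with hS_def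
  have hS : 0 ≤ S := Real.iSup_nonneg fun _ => norm_nonneg _
  rcases Nat.eq_zero_or_pos N with hN | hN
  · subst hN
    have hz : (∫ s in a..b, hermitianFunCalc hA (fun lam => f lam s)) -
        ∑ q, w q • hermitianFunCalc hA (fun lam => f lam (x q)) = 0 := Subsingleton.elim _ _
    rw [hz, norm_zero]
    exact mul_nonneg hC hS
  haveI : Nonempty (Fin N) := ⟨⟨0, hN⟩⟩
  rcases eq_or_lt_of_le hab with heq | hlt
  · obtain ⟨ξ, hξ, -⟩ := herr ⟨0, hN⟩
    subst heq
    simp at hξ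
  -- main case
  set U : Matrix (Fin N) (Fin N) ℂ := (hA.eigenvectorUnitary : Matrix (Fin N) (Fin N) ℂ) with hU
  set Llin : (Fin N → ℂ) →ₗ[ℂ] Matrix (Fin N) (Fin N) ℂ :=
    { toFun := fun d => U * Matrix.diagonal d * star U
      map_add' := fun d e => by
        show U * Matrix.diagonal (d + e) * star U
          = U * Matrix.diagonal d * star U + U * Matrix.diagonal e * star U
        rw [show Matrix.diagonal (d + e) = Matrix.diagonal d + Matrix.diagonal e from
          (Matrix.diagonal_add d e).symm, mul_add, add_mul]
      map_smul' := fun c d => by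
        show U * Matrix.diagonal (c • d) * star U = c • (U * Matrix.diagonal d * star U)
        rw [show Matrix.diagonal (c • d) = c • Matrix.diagonal d from Matrix.diagonal_smul c d, Matrix.mul_smul, Matrix.smul_mul] } with hLlin
  set L : (Fin N → ℂ) →L[ℂ] Matrix (Fin N) (Fin N) ℂ := LinearMap.toContinuousLinearMap Llin
    with hL
  have hLcalc : ∀ g : ℝ → ℂ, hermitianFunCalc hA g = L (fun i => g (hA.eigenvalues i)) :=
    fun g => rfl
  set v : ℝ → (Fin N → ℂ) := fun s i => f (hA.eigenvalues i) s with hv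
  have hv_cont : ContinuousOn v (Set.Icc a b) :=
    continuousOn_pi.2 fun i => (hf i).continuousOn
  have hv_int : IntervalIntegrable v volume a b := by
    apply ContinuousOn.intervalIntegrable
    rwa [Set.uIcc_of_le hab]
  have hint : (∫ s in a..b, hermitianFunCalc hA (fun lam => f lam s))
      = L (∫ s in a..b, v s) := L.intervalIntegral_comp_comm hv_int
  have hsum : (∑ q, w q • hermitianFunCalc hA (fun lam => f lam (x q)))
      = L (∑ q, w q • fun i => f (hA.eigenvalues i) (x q)) := by
    rw [map_sum]
    refine Finset.sum_congr rfl fun q _ => ?_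
    rw [L.map_smul_of_tower, hLcalc]
  set err : Fin N → ℂ := (∫ s in a..b, v s) - ∑ q, w q • fun i => f (hA.eigenvalues i) (x q)
    with herr_def
  have hmain : (∫ s in a..b, hermitianFunCalc hA (fun lam => f lam s)) -
      ∑ q, w q • hermitianFunCalc hA (fun lam => f lam (x q)) = L err := by
    rw [hint, hsum, ← map_sub]
  have herr_i : ∀ i, ∃ ξ ∈ Set.Icc a b, err i = (C : ℂ) *
      iteratedDerivWithin (2 * Q) (f (hA.eigenvalues i)) (Set.Icc a b) ξ := by
    intro i
    obtain ⟨ξ, hξIoo, h2⟩ := herr i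
    refine ⟨ξ, Set.Ioo_subset_Icc_self hξIoo, ?_⟩
    have hproj := (ContinuousLinearMap.proj (R := ℂ) (φ := fun _ : Fin N => ℂ)
      i).intervalIntegral_comp_comm hv_int
    have h1 : (∫ s in a..b, v s) i = ∫ s in a..b, f (hA.eigenvalues i) s := hproj.symm
    simp only [herr_def, Pi.sub_apply, Finset.sum_apply, Pi.smul_apply, h1, Complex.real_smul]
    exact h2
  -- boundedness of sup
  have hbdd : BddAbove (Set.range fun s : Set.Icc a b =>
      ‖hermitianFunCalc hA
        (fun lam => iteratedDerivWithin (2 * Q) (f lam) (Set.Icc a b) (s : ℝ))‖) := by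
    have hDcont : ContinuousOn
        (fun s : ℝ => (fun i => iteratedDerivWithin (2 * Q) (f (hA.eigenvalues i))
          (Set.Icc a b) s : Fin N → ℂ)) (Set.Icc a b) :=
      continuousOn_pi.2 fun i => (hf i).continuousOn_iteratedDerivWithin
        (by exact_mod_cast le_rfl) (uniqueDiffOn_Icc hlt)
    have hgcont : ContinuousOn (fun s : ℝ =>
        ‖hermitianFunCalc hA
          (fun lam => iteratedDerivWithin (2 * Q) (f lam) (Set.Icc a b) s)‖) (Set.Icc a b) := by
      rw [show (fun s : ℝ =>
        ‖hermitianFunCalc hA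
          (fun lam => iteratedDerivWithin (2 * Q) (f lam) (Set.Icc a b) s)‖)
        = fun s => ‖L (fun i => iteratedDerivWithin (2 * Q) (f (hA.eigenvalues i))
            (Set.Icc a b) s)‖ from rfl]
      exact (L.continuous.comp_continuousOn hDcont).norm
    have hrange : (Set.range fun s : Set.Icc a b =>
        ‖hermitianFunCalc hA
          (fun lam => iteratedDerivWithin (2 * Q) (f lam) (Set.Icc a b) (s : ℝ))‖)
        = (fun s : ℝ => ‖hermitianFunCalc hA
          (fun lam => iteratedDerivWithin (2 * Q) (f lam) (Set.Icc a b) s)‖) '' Set.Icc a b := by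
      exact (Set.image_eq_range (fun s : ℝ => ‖hermitianFunCalc hA fun lam => iteratedDerivWithin (2 * Q) (f lam) (Set.Icc a b) s‖) (Set.Icc a b)).symm
    rw [hrange]
    exact (isCompact_Icc.image_of_continuousOn hgcont).bddAbove
  have hnormcalc : ∀ g : ℝ → ℂ, ‖hermitianFunCalc hA g‖
      = ‖Matrix.diagonal (fun i => g (hA.eigenvalues i))‖ :=
    fun g => norm_conj_unitary hA.eigenvectorUnitary _
  have hfinal : ‖L err‖ = ‖Matrix.diagonal err‖ := norm_conj_unitary hA.eigenvectorUnitary _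
  clear_value C S U Llin L v err
  have key : ∀ i, ‖err i‖ ≤ C * S := by
    intro i
    obtain ⟨ξ, hξ, heq⟩ := herr_i i
    rw [heq, norm_mul, Complex.norm_real, Real.norm_of_nonneg hC]
    refine mul_le_mul_of_nonneg_left ?_ hC
    have hle : ‖iteratedDerivWithin (2 * Q) (f (hA.eigenvalues i)) (Set.Icc a b) ξ‖
        ≤ ‖hermitianFunCalc hA
            (fun lam => iteratedDerivWithin (2 * Q) (f lam) (Set.Icc a b) ξ)‖ := by
      rw [hnormcalc]
      exact le_l2_opNorm_diagonal
        (fun j => iteratedDerivWithin (2 * Q) (f (hA.eigenvalues j)) (Set.Icc a b) ξ) i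
    refine hle.trans ?_
    rw [hS_def]
    exact le_ciSup hbdd (⟨ξ, hξ⟩ : Set.Icc a b)
  rw [hmain, hfinal]
  exact l2_opNorm_diagonal_le err (C * S) (mul_nonneg hC hS) key
end
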